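/- arXiv:math/0505384 — 8 statements merged into one kernel-verified Lean document; each statement's English description precedes it below -/
import Mathlib

section
/- Let p be a sub-harmonic projection for τ. Then for every x ∈ B(H) and every n ≥ 0 one has τ^n(x(1−p))·p = 0. -/
/- STATEMENT 1: Let p be a sub-harmonic projection for τ. Then for every
x ∈ B(H) and every n ≥ 0 one has τ^n(x(1−p))·p = 0. -/

theorem subharmonic_projection_iterate_annihilate
    {H : Type*} [NormedAddCommGroup H] [InnerProductSpace ℂ H]
    [CompleteSpace H] [TopologicalSpace.SeparableSpace H]
    (τ : (H →L[ℂ] H) → (H →L[ℂ] H)) (l : ℕ → H →L[ℂ] H)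
    (hKraus : ∀ (x : H →L[ℂ] H) (ξ : H),
      HasSum (fun k => star (l k) (x ((l k) ξ))) (τ x ξ))
    (hUnital : ∀ ξ : H, HasSum (fun k => star (l k) ((l k) ξ)) ξ)
    (p : H →L[ℂ] H) (hp_idem : p * p = p) (hp_sa : IsSelfAdjoint p)
    (hp_sub : (τ p - p).IsPositive) :
    ∀ (x : H →L[ℂ] H) (n : ℕ), τ^[n] (x * (1 - p)) * p = 0 := by
  -- p is symmetric
  have hsymm : ∀ (v w : H), (inner ℂ (p v) w : ℂ) = inner ℂ v (p w) := by
    intro v w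
    have : ContinuousLinearMap.adjoint p = p := by
      rw [← ContinuousLinearMap.star_eq_adjoint]; exact hp_sa
    calc (inner ℂ (p v) w : ℂ) = inner ℂ v (ContinuousLinearMap.adjoint p w) := by
          rw [ContinuousLinearMap.adjoint_inner_right]
      _ = inner ℂ v (p w) := by rw [this]
  -- key : (1 - p) (l k (p ξ)) = 0
  have key : ∀ (k : ℕ) (ξ : H), (l k) (p ξ) - p ((l k) (p ξ)) = 0 := by
    intro k ξ
    set η := p ξ with hη
    have hpη : p η = η := by
      rw [hη, ← ContinuousLinearMap.mul_apply, hp_idem]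
    have h1 : HasSum (fun k => star (l k) (p ((l k) η))) (τ p η) := hKraus p η
    have h2 : HasSum (fun k => star (l k) ((l k) η)) η := hUnital η
    have h3 : HasSum (fun k => star (l k) ((l k) η) - star (l k) (p ((l k) η)))
        (η - τ p η) := h2.sub h1
    -- apply re ⟪η, ·⟫
    have h4 : HasSum
        (fun k => (inner ℂ η (star (l k) ((l k) η) - star (l k) (p ((l k) η))) : ℂ).re)
        ((inner ℂ η (η - τ p η) : ℂ).re) :=
      (h3.mapL (innerSL ℂ η)).mapL Complex.reCLM
    -- rewrite each term as a norm square
    have hterm : ∀ k,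
        (inner ℂ η (star (l k) ((l k) η) - star (l k) (p ((l k) η))) : ℂ).re
          = ‖(l k) η - p ((l k) η)‖ ^ 2 := by
      intro k
      have hs : ∀ (u : H), (inner ℂ η ((star (l k)) u) : ℂ) = inner ℂ ((l k) η) u := by
        intro u
        rw [ContinuousLinearMap.star_eq_adjoint, ContinuousLinearMap.adjoint_inner_right]
      rw [inner_sub_right, hs, hs, ← inner_sub_right]
      have : (inner ℂ ((l k) η) ((l k) η - p ((l k) η)) : ℂ)
          = inner ℂ ((l k) η - p ((l k) η)) ((l k) η - p ((l k) η)) := by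
        set w := (l k) η
        rw [inner_sub_left, inner_sub_right, inner_sub_right]
        have h1 : (inner ℂ (p w) w : ℂ) = inner ℂ w (p w) := hsymm w w
        have h2 : (inner ℂ (p w) (p w) : ℂ) = inner ℂ w (p w) := by
          rw [hsymm w (p w), ← ContinuousLinearMap.mul_apply, hp_idem]
        rw [h1, h2]; ring
      rw [this, inner_self_eq_norm_sq_to_K]
      simp [← Complex.ofReal_pow]
    -- the total is ≤ 0
    have hle : (inner ℂ η (η - τ p η) : ℂ).re ≤ 0 := by
      have hpos := hp_sub.inner_nonneg_left η
      have : ((τ p - p) η : H) = τ p η - η := by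
        rw [ContinuousLinearMap.sub_apply, hpη]
      rw [this] at hpos
      replace hpos : 0 ≤ (inner ℂ (τ p η - η) η : ℂ).re := (Complex.le_def.mp hpos).1
      have hre : (inner ℂ η (η - τ p η) : ℂ).re = -(inner ℂ (τ p η - η) η : ℂ).re := by
        rw [inner_sub_right, inner_sub_left]
        have hc : (inner ℂ η (τ p η) : ℂ).re = (inner ℂ (τ p η) η : ℂ).re := by
          rw [← inner_conj_symm η (τ p η), Complex.conj_re]
        simp only [Complex.sub_re, hc]
        ring
      rw [hre]
      linarith
    -- each term is nonneg and the sum is ≤ 0, so each term is 0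
    have hnn : ∀ k, (0:ℝ) ≤ ‖(l k) η - p ((l k) η)‖ ^ 2 := fun k => sq_nonneg _
    have h5 : HasSum (fun k => ‖(l k) η - p ((l k) η)‖ ^ 2) ((inner ℂ η (η - τ p η) : ℂ).re) := by
      simpa only [hterm] using h4
    have hk : ‖(l k) η - p ((l k) η)‖ ^ 2 ≤ (inner ℂ η (η - τ p η) : ℂ).re :=
      le_hasSum h5 k (fun j _ => hnn j)
    have : ‖(l k) η - p ((l k) η)‖ ^ 2 = 0 := le_antisymm (hk.trans hle) (hnn k)
    have := pow_eq_zero_iff (n := 2) (by norm_num) |>.mp this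
    exact norm_eq_zero.mp this
  -- step : if y * p = 0 then τ y * p = 0
  have step : ∀ y : H →L[ℂ] H, y * p = 0 → τ y * p = 0 := by
    intro y hy
    ext ξ
    have h := hKraus y (p ξ)
    have hz : ∀ k, star (l k) (y ((l k) (p ξ))) = 0 := by
      intro k
      have hd : (l k) (p ξ) = p ((l k) (p ξ)) := by
        have := key k ξ
        rwa [sub_eq_zero] at this
      rw [hd]
      have : y (p ((l k) (p ξ))) = (y * p) ((l k) (p ξ)) := rfl
      rw [this, hy]
      simp
    simp only [hz] at h
    have := h.unique hasSum_zero
    simpa using this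
  intro x n
  induction n with
  | zero =>
    simp only [Function.iterate_zero, id_eq]
    rw [mul_assoc, sub_mul, one_mul, hp_idem, sub_self, mul_zero]
  | succ n ih =>
    rw [Function.iterate_succ_apply']
    exact step _ ih
end

section
/- Let x ∈ B(H) be a non-negative operator (x ≥ 0) with τ(x) = x, and let q be the orthogonal projection onto the closure of the range of x. Then 1−q is sub-harmonic for τ, i.e. τ(q) ≤ q. -/
local notation "⟪" a ", " b "⟫" => @inner ℂ _ _ a b

/-- A positive operator with vanishing quadratic form at a point kills that point. -/
lemma aux_pos_apply_eq_zero {H : Type*} [NormedAddCommGroup H] [InnerProductSpace ℂ H]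
    [CompleteSpace H] {x : H →L[ℂ] H} (hx : x.IsPositive) {η : H}
    (h : RCLike.re ⟪x η, η⟫ = 0) : x η = 0 := by
  have hsym := hx.1
  set ζ := x η with hζ
  set c : ℝ := RCLike.re ⟪x ζ, ζ⟫ with hc
  set b : ℝ := RCLike.re ⟪x η, ζ⟫ with hb
  have hkey : ∀ t : ℝ, 0 ≤ c * (t * t) + (2 * b) * t + 0 := by
    intro t
    have h0 : 0 ≤ RCLike.re ⟪x (η + (t : ℂ) • ζ), η + (t : ℂ) • ζ⟫ :=
      hx.re_inner_nonneg_left _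
    have hexp : ⟪x (η + (t : ℂ) • ζ), η + (t : ℂ) • ζ⟫
        = ⟪x η, η⟫ + (t : ℂ) * ⟪x η, ζ⟫ + (t : ℂ) * ⟪x ζ, η⟫
          + (t : ℂ) * ((t : ℂ) * ⟪x ζ, ζ⟫) := by
      rw [map_add, map_smul]
      rw [inner_add_left, inner_add_right, inner_add_right, inner_smul_left,
        inner_smul_right, inner_smul_left, inner_smul_right]
      simp [Complex.conj_ofReal]
      ring
    have hflip : RCLike.re ⟪x ζ, η⟫ = b := by
      have hs := hsym ζ η
      simp only [ContinuousLinearMap.coe_coe] at hs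
      rw [hs, inner_re_symm]
    rw [hexp] at h0
    simp only [RCLike.re_to_complex] at h0 h hflip hb hc ⊢
    simp only [Complex.add_re, Complex.re_ofReal_mul] at h0
    rw [h, hflip] at h0
    rw [hb, hc]
    clear_value b c
    subst hb
    nlinarith [h0]
  have hd := discrim_le_zero hkey
  have hb0 : b = 0 := by
    simp only [discrim] at hd
    nlinarith [hd]
  have h2 : ‖x η‖ ^ 2 = 0 := by
    rw [← inner_self_eq_norm_sq (𝕜 := ℂ) (x η)]
    exact hb0
  exact norm_eq_zero.mp (pow_eq_zero_iff two_ne_zero |>.mp h2)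


/- STATEMENT 3: Let x ≥ 0 with τ(x) = x, and let q be the orthogonal
projection onto the closure of the range of x. Then 1−q is sub-harmonic
for τ, i.e. τ(q) ≤ q. -/

theorem range_projection_of_invariant_is_superharmonic
    {H : Type*} [NormedAddCommGroup H] [InnerProductSpace ℂ H]
    [CompleteSpace H] [TopologicalSpace.SeparableSpace H]
    (τ : (H →L[ℂ] H) → (H →L[ℂ] H)) (l : ℕ → H →L[ℂ] H)
    (hKraus : ∀ (x : H →L[ℂ] H) (ξ : H),
      HasSum (fun k => star (l k) (x ((l k) ξ))) (τ x ξ))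
    (hUnital : ∀ ξ : H, HasSum (fun k => star (l k) ((l k) ξ)) ξ)
    (x : H →L[ℂ] H) (hx_pos : x.IsPositive) (hx_inv : τ x = x)
    (q : H →L[ℂ] H) (hq_idem : q * q = q) (hq_sa : IsSelfAdjoint q)
    (hq_range : LinearMap.range (q : H →ₗ[ℂ] H)
      = (LinearMap.range (x : H →ₗ[ℂ] H)).topologicalClosure) :
    (q - τ q).IsPositive := by
  have hxsym' : ∀ a b : H, ⟪x a, b⟫ = ⟪a, x b⟫ := fun a b => hx_pos.1 a b
  have hqsym' : ∀ a b : H, ⟪q a, b⟫ = ⟪a, q b⟫ := fun a b => hq_sa.isSymmetric a b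
  have hq2 : ∀ v, q (q v) = q v := fun v => by
    have := congrArg (fun (A : H →L[ℂ] H) => A v) hq_idem
    simpa [ContinuousLinearMap.mul_apply] using this
  have hqx : ∀ v, q (x v) = x v := by
    intro v
    have hm : x v ∈ LinearMap.range (q : H →ₗ[ℂ] H) := by
      rw [hq_range]
      exact Submodule.le_topologicalClosure _ ⟨v, rfl⟩
    obtain ⟨w, hw⟩ := hm
    simp only [ContinuousLinearMap.coe_coe] at hw
    rw [← hw]
    exact hq2 w
  -- A1 : ker q ⊆ ker x
  have hA1 : ∀ ξ, q ξ = 0 → x ξ = 0 := by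
    intro ξ h0
    have hz : ⟪x ξ, x ξ⟫ = 0 := by
      calc ⟪x ξ, x ξ⟫ = ⟪ξ, x (x ξ)⟫ := hxsym' ξ (x ξ)
        _ = ⟪ξ, q (x (x ξ))⟫ := by rw [hqx]
        _ = ⟪q ξ, x (x ξ)⟫ := (hqsym' ξ _).symm
        _ = 0 := by rw [h0, inner_zero_left]
    exact inner_self_eq_zero.mp hz
  -- A2 : ker x ⊆ ker q
  have hA2 : ∀ ξ, x ξ = 0 → q ξ = 0 := by
    intro ξ h0
    have horth : ∀ v : H, ⟪ξ, x v⟫ = 0 := fun v => by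
      rw [← hxsym' ξ v, h0, inner_zero_left]
    have hcl : LinearMap.range (x : H →ₗ[ℂ] H) ≤ (innerSL ℂ ξ).ker := by
      rintro _ ⟨v, rfl⟩
      simpa using horth v
    have hcl2 : (LinearMap.range (x : H →ₗ[ℂ] H)).topologicalClosure
        ≤ (innerSL ℂ ξ).ker :=
      Submodule.topologicalClosure_minimal _ hcl (ContinuousLinearMap.isClosed_ker _)
    have hqmem : q ξ ∈ LinearMap.range (q : H →ₗ[ℂ] H) := ⟨ξ, rfl⟩
    rw [hq_range] at hqmem
    have hz0 : ⟪ξ, q ξ⟫ = 0 := by simpa using hcl2 hqmem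
    have hz : ⟪q ξ, q ξ⟫ = 0 := by
      rw [hqsym' ξ (q ξ), hq2, hz0]
    exact inner_self_eq_zero.mp hz
  -- B : ker q is invariant under each l k
  have hB : ∀ ξ, q ξ = 0 → ∀ k, q (l k ξ) = 0 := by
    intro ξ h0 k
    have hx0 : x ξ = 0 := hA1 ξ h0
    have hs0 : HasSum (fun k => star (l k) (x (l k ξ))) (x ξ) := by
      have := hKraus x ξ; rwa [hx_inv] at this
    have hS : HasSum (fun k => RCLike.re ⟪ξ, star (l k) (x (l k ξ))⟫)
        (RCLike.re ⟪ξ, x ξ⟫) := RCLike.reCLM.hasSum ((innerSL ℂ ξ).hasSum hs0)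
    have hfun : (fun k => RCLike.re ⟪ξ, star (l k) (x (l k ξ))⟫)
        = fun k => RCLike.re ⟪x (l k ξ), l k ξ⟫ := by
      funext k
      rw [ContinuousLinearMap.star_eq_adjoint, ContinuousLinearMap.adjoint_inner_right,
        inner_re_symm]
    rw [hfun, hx0] at hS
    simp only [inner_zero_right, map_zero] at hS
    have hzero := (hasSum_zero_iff_of_nonneg
      (fun k => hx_pos.re_inner_nonneg_left (l k ξ))).mp hS
    have hterm : RCLike.re ⟪x (l k ξ), l k ξ⟫ = 0 := congrFun hzero k
    exact hA2 _ (aux_pos_apply_eq_zero hx_pos hterm)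
  -- q l_k depends only on q ξ
  have hql : ∀ ξ k, q (l k ξ) = q (l k (q ξ)) := by
    intro ξ k
    have h0 : q (ξ - q ξ) = 0 := by rw [map_sub, hq2, sub_self]
    have hz := hB (ξ - q ξ) h0 k
    rw [map_sub, map_sub, sub_eq_zero] at hz
    exact hz
  -- self-adjointness of τ q
  have hτsa : IsSelfAdjoint (τ q) := by
    rw [ContinuousLinearMap.isSelfAdjoint_iff_isSymmetric]
    intro ξ η
    have h1 : HasSum (fun k => ⟪η, star (l k) (q (l k ξ))⟫) ⟪η, τ q ξ⟫ :=
      (innerSL ℂ η).hasSum (hKraus q ξ)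
    have h2 : HasSum (fun k => ⟪ξ, star (l k) (q (l k η))⟫) ⟪ξ, τ q η⟫ :=
      (innerSL ℂ ξ).hasSum (hKraus q η)
    have h2s := h2.star
    have hterm : (fun k => star ⟪ξ, star (l k) (q (l k η))⟫)
        = fun k => ⟪η, star (l k) (q (l k ξ))⟫ := by
      funext k
      rw [ContinuousLinearMap.star_eq_adjoint]
      calc star ⟪ξ, (ContinuousLinearMap.adjoint (l k)) (q (l k η))⟫
          = ⟪(ContinuousLinearMap.adjoint (l k)) (q (l k η)), ξ⟫ := by
            rw [RCLike.star_def, inner_conj_symm]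
        _ = ⟪q (l k η), l k ξ⟫ := ContinuousLinearMap.adjoint_inner_left _ _ _
        _ = ⟪l k η, q (l k ξ)⟫ := hqsym' _ _
        _ = ⟪η, (ContinuousLinearMap.adjoint (l k)) (q (l k ξ))⟫ :=
            (ContinuousLinearMap.adjoint_inner_right _ _ _).symm
        _ = ⟪η, star (l k) (q (l k ξ))⟫ := by rw [ContinuousLinearMap.star_eq_adjoint]
    rw [hterm] at h2s
    have hx1 : star ⟪ξ, τ q η⟫ = ⟪η, τ q ξ⟫ := h2s.unique h1
    calc ⟪(τ q) ξ, η⟫ = star ⟪η, (τ q) ξ⟫ := by rw [RCLike.star_def, inner_conj_symm]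
      _ = star (star ⟪ξ, τ q η⟫) := by rw [hx1]
      _ = ⟪ξ, (τ q) η⟫ := star_star _
  -- norm identity for the projection
  have hqn : ∀ v : H, RCLike.re ⟪q v, v⟫ = ‖q v‖ ^ 2 := by
    intro v
    have : ⟪q v, v⟫ = ⟪q v, q v⟫ := by
      conv_lhs => rw [← hq2 v]
      exact hqsym' (q v) v
    rw [this, inner_self_eq_norm_sq]
  -- positivity
  refine ⟨(hq_sa.sub hτsa).isSymmetric, fun ξ => ?_⟩
  rw [ContinuousLinearMap.reApplyInnerSelf, ContinuousLinearMap.sub_apply,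
    inner_sub_left, map_sub]
  have hS1 : HasSum (fun k => RCLike.re ⟪ξ, star (l k) (q (l k ξ))⟫)
      (RCLike.re ⟪ξ, τ q ξ⟫) := RCLike.reCLM.hasSum ((innerSL ℂ ξ).hasSum (hKraus q ξ))
  have hfun1 : (fun k => RCLike.re ⟪ξ, star (l k) (q (l k ξ))⟫)
      = fun k => ‖q (l k (q ξ))‖ ^ 2 := by
    funext k
    rw [ContinuousLinearMap.star_eq_adjoint, ContinuousLinearMap.adjoint_inner_right,
      inner_re_symm, hqn, hql]
  rw [hfun1] at hS1
  have hS2 : HasSum (fun k => RCLike.re ⟪q ξ, star (l k) (l k (q ξ))⟫)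
      (RCLike.re ⟪q ξ, q ξ⟫) := RCLike.reCLM.hasSum ((innerSL ℂ (q ξ)).hasSum (hUnital (q ξ)))
  have hfun2 : (fun k => RCLike.re ⟪q ξ, star (l k) (l k (q ξ))⟫)
      = fun k => ‖l k (q ξ)‖ ^ 2 := by
    funext k
    rw [ContinuousLinearMap.star_eq_adjoint, ContinuousLinearMap.adjoint_inner_right,
      inner_self_eq_norm_sq]
  rw [hfun2, inner_self_eq_norm_sq] at hS2
  have hle : RCLike.re ⟪ξ, τ q ξ⟫ ≤ ‖q ξ‖ ^ 2 := by
    refine hasSum_le (fun k => ?_) hS1 hS2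
    set w := l k (q ξ)
    have hcs : RCLike.re ⟪q w, w⟫ ≤ ‖q w‖ * ‖w‖ := re_inner_le_norm _ _
    rw [hqn w] at hcs
    nlinarith [sq_nonneg (‖q w‖ - ‖w‖), hcs]
  have hfin : RCLike.re ⟪(τ q) ξ, ξ⟫ = RCLike.re ⟪ξ, τ q ξ⟫ := inner_re_symm _ _
  rw [hqn ξ] at *
  linarith [hle, hfin, hqn ξ]
end

section
/- Let p be a sub-harmonic projection for τ and let y be the strong limit of τ^n(p). If there exists λ > 0 such that y ≥ λ·1, then y = 1. -/
/- STATEMENT 5: Let p be a sub-harmonic projection for τ and let y be the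
strong limit of τ^n(p). If y ≥ λ·1 for some λ > 0, then y = 1. -/

theorem strong_limit_bounded_below_eq_one
    {H : Type*} [NormedAddCommGroup H] [InnerProductSpace ℂ H]
    [CompleteSpace H] [TopologicalSpace.SeparableSpace H]
    (τ : (H →L[ℂ] H) → (H →L[ℂ] H)) (l : ℕ → H →L[ℂ] H)
    (hKraus : ∀ (x : H →L[ℂ] H) (ξ : H),
      HasSum (fun k => star (l k) (x ((l k) ξ))) (τ x ξ))
    (hUnital : ∀ ξ : H, HasSum (fun k => star (l k) ((l k) ξ)) ξ)
    (p : H →L[ℂ] H) (hp_idem : p * p = p) (hp_sa : IsSelfAdjoint p)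
    (hp_sub : (τ p - p).IsPositive)
    (y : H →L[ℂ] H) (hy_pos : y.IsPositive) (hy_le : (1 - y).IsPositive)
    (hy_lim : ∀ ξ : H, Filter.Tendsto (fun n => (τ^[n] p) ξ)
      Filter.atTop (nhds (y ξ)))
    (hbound : ∃ lam : ℝ, 0 < lam ∧ (y - (lam : ℂ) • 1).IsPositive) :
    y = 1 := by
  obtain ⟨lam, hlam, hblam⟩ := hbound
  -- quadratic form
  set Q : (H →L[ℂ] H) → H → ℝ := fun a ξ => (@inner ℂ H _ ξ (a ξ)).re with hQdef
  -- symmetric operators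
  have hsym : ∀ (a : H →L[ℂ] H), IsSelfAdjoint a →
      ∀ u v : H, @inner ℂ H _ (a u) v = @inner ℂ H _ u (a v) :=
    fun a ha u v => (ContinuousLinearMap.isSelfAdjoint_iff_isSymmetric.mp ha) u v
  have hrefl : ∀ (a : H →L[ℂ] H) (ξ : H), (@inner ℂ H _ (a ξ) ξ).re = Q a ξ := by
    intro a ξ
    simp only [hQdef]
    rw [← inner_conj_symm ξ (a ξ), Complex.conj_re]
  have hreapp : ∀ (a : H →L[ℂ] H) (ξ : H), a.reApplyInnerSelf ξ = Q a ξ := by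
    intro a ξ
    have h1 : a.reApplyInnerSelf ξ = (@inner ℂ H _ (a ξ) ξ).re := rfl
    rw [h1, hrefl]
  have hpp : ∀ ξ : H, p (p ξ) = p ξ := by
    intro ξ
    simpa [ContinuousLinearMap.mul_apply] using ContinuousLinearMap.ext_iff.mp hp_idem ξ
  -- basic sums
  have hsum : ∀ (x : H →L[ℂ] H) (ξ : H),
      HasSum (fun k => @inner ℂ H _ (l k ξ) (x (l k ξ))) (@inner ℂ H _ ξ (τ x ξ)) := by
    intro x ξ
    have h := (innerSL ℂ ξ).hasSum (hKraus x ξ)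
    simp only [innerSL_apply_apply] at h
    refine h.congr_fun fun k => ?_
    rw [← ContinuousLinearMap.adjoint_inner_right, ContinuousLinearMap.star_eq_adjoint]
  have hQsum : ∀ (x : H →L[ℂ] H) (ξ : H),
      HasSum (fun k => Q x (l k ξ)) (Q (τ x) ξ) := by
    intro x ξ
    exact Complex.reCLM.hasSum (hsum x ξ)
  -- τ(1) = 1
  have hτ1 : τ 1 = 1 := by
    ext ξ
    have h1 := hKraus 1 ξ
    simp only [ContinuousLinearMap.one_apply] at h1 ⊢
    exact h1.unique (hUnital ξ)
  -- monotonicity of the form under τ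
  have hQmono : ∀ a b : H →L[ℂ] H, (∀ η, Q a η ≤ Q b η) → ∀ ξ, Q (τ a) ξ ≤ Q (τ b) ξ :=
    fun a b h ξ => hasSum_le (fun k => h (l k ξ)) (hQsum a ξ) (hQsum b ξ)
  have hQmono_iter : ∀ a b : H →L[ℂ] H, (∀ η, Q a η ≤ Q b η) →
      ∀ n ξ, Q (τ^[n] a) ξ ≤ Q (τ^[n] b) ξ := by
    intro a b h n
    induction n with
    | zero => simpa using h
    | succ n ih =>
      intro ξ
      rw [Function.iterate_succ_apply' τ n a, Function.iterate_succ_apply' τ n b]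
      exact hQmono _ _ ih ξ
  -- monotone chain
  have hchain : ∀ n (ξ : H), Q (τ^[n] p) ξ ≤ Q (τ^[n + 1] p) ξ := by
    intro n
    have hbase : ∀ ξ, Q p ξ ≤ Q (τ p) ξ := by
      intro ξ
      have h := hp_sub.2 ξ
      rw [hreapp] at h
      have h2 : Q (τ p - p) ξ = Q (τ p) ξ - Q p ξ := by
        simp only [hQdef, ContinuousLinearMap.sub_apply, inner_sub_right, Complex.sub_re]
      rw [h2] at h
      linarith
    have := hQmono_iter p (τ p) hbase n
    intro ξ
    have h2 : τ^[n] (τ p) = τ^[n + 1] p := by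
      rw [Function.iterate_succ_apply]
    rw [← h2]
    exact this ξ
  have hmonoQ : ∀ ξ, Monotone fun n => Q (τ^[n] p) ξ :=
    fun ξ => monotone_nat_of_le_succ fun n => hchain n ξ
  -- limit of forms
  have hQlim : ∀ ξ, Filter.Tendsto (fun n => Q (τ^[n] p) ξ) Filter.atTop (nhds (Q y ξ)) := by
    intro ξ
    have h1 : Filter.Tendsto (fun n => @inner ℂ H _ ξ ((τ^[n] p) ξ)) Filter.atTop
        (nhds (@inner ℂ H _ ξ (y ξ))) := Filter.Tendsto.inner tendsto_const_nhds (hy_lim ξ)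
    exact (Complex.continuous_re.tendsto _).comp h1
  have hle_y : ∀ n ξ, Q (τ^[n] p) ξ ≤ Q y ξ :=
    fun n ξ => (hmonoQ ξ).ge_of_tendsto (hQlim ξ) n
  -- positivity of forms
  have hQp_nonneg : ∀ ξ, 0 ≤ Q p ξ := by
    intro ξ
    have : Q p ξ = (@inner ℂ H _ (p ξ) (p ξ)).re := by
      simp only [hQdef]
      conv_lhs => rw [← hpp ξ]
      rw [← hsym p hp_sa ξ (p ξ)]
    rw [this]
    exact @inner_self_nonneg ℂ H _ _ _ (p ξ)
  have hQpos : ∀ n ξ, 0 ≤ Q (τ^[n] p) ξ := by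
    intro n ξ
    refine le_trans (hQp_nonneg ξ) ?_
    have := hmonoQ ξ (Nat.zero_le n)
    simpa using this
  -- τ(y) = y, first the two form inequalities
  have hτy_ge : ∀ ξ, Q y ξ ≤ Q (τ y) ξ := by
    intro ξ
    have hsub : Filter.Tendsto (fun n => Q (τ^[n + 1] p) ξ) Filter.atTop (nhds (Q y ξ)) :=
      (hQlim ξ).comp (Filter.tendsto_add_atTop_nat 1)
    refine le_of_tendsto hsub (Filter.Eventually.of_forall fun n => ?_)
    rw [Function.iterate_succ_apply' τ n p]
    exact hasSum_le (fun k => hle_y n (l k ξ)) (hQsum (τ^[n] p) ξ) (hQsum y ξ)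
  have hτy_le : ∀ ξ, Q (τ y) ξ ≤ Q y ξ := by
    intro ξ
    refine hasSum_le_of_sum_le (hQsum y ξ) fun s => ?_
    have hts : Filter.Tendsto (fun n => ∑ k ∈ s, Q (τ^[n] p) (l k ξ)) Filter.atTop
        (nhds (∑ k ∈ s, Q y (l k ξ))) :=
      tendsto_finset_sum _ fun k _ => hQlim (l k ξ)
    refine le_of_tendsto hts (Filter.Eventually.of_forall fun n => ?_)
    calc ∑ k ∈ s, Q (τ^[n] p) (l k ξ)
        ≤ Q (τ (τ^[n] p)) ξ :=
          sum_le_hasSum s (fun k _ => hQpos n (l k ξ)) (hQsum (τ^[n] p) ξ)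
      _ = Q (τ^[n + 1] p) ξ := by rw [Function.iterate_succ_apply' τ n p]
      _ ≤ Q y ξ := hle_y (n + 1) ξ
  -- realness of the relevant inner products
  have hreal : ∀ (a : H →L[ℂ] H), IsSelfAdjoint a → ∀ v : H,
      (@inner ℂ H _ v (a v)).im = 0 := by
    intro a ha v
    have h1 : (starRingEnd ℂ) (@inner ℂ H _ v (a v)) = @inner ℂ H _ v (a v) := by
      rw [inner_conj_symm, hsym a ha]
    rw [Complex.conj_eq_iff_im] at h1
    exact h1
  have himτy : ∀ ξ, (@inner ℂ H _ ξ (τ y ξ)).im = 0 := by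
    intro ξ
    have h := Complex.imCLM.hasSum (hsum y ξ)
    have h0 : (fun k => Complex.imCLM (@inner ℂ H _ (l k ξ) (y (l k ξ)))) = fun _ => (0 : ℝ) := by
      funext k
      exact hreal y hy_pos.isSelfAdjoint (l k ξ)
    rw [h0] at h
    exact (h.unique hasSum_zero)
  have hτy : τ y = y := by
    have hQeq : ∀ ξ, @inner ℂ H _ ξ (τ y ξ) = @inner ℂ H _ ξ (y ξ) := by
      intro ξ
      apply Complex.ext
      · exact le_antisymm (hτy_le ξ) (hτy_ge ξ)
      · rw [himτy ξ, hreal y hy_pos.isSelfAdjoint ξ]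
    apply ContinuousLinearMap.coe_injective
    rw [← ext_inner_map ((τ y : H →L[ℂ] H) : H →ₗ[ℂ] H) ((y : H →L[ℂ] H) : H →ₗ[ℂ] H)]
    intro ξ
    have := hQeq ξ
    calc @inner ℂ H _ (τ y ξ) ξ = (starRingEnd ℂ) (@inner ℂ H _ ξ (τ y ξ)) := by
          rw [inner_conj_symm]
      _ = (starRingEnd ℂ) (@inner ℂ H _ ξ (y ξ)) := by rw [this]
      _ = @inner ℂ H _ (y ξ) ξ := by rw [inner_conj_symm]
  -- τ(1 - y) = 1 - y
  have hτz : τ (1 - y) = 1 - y := by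
    ext ξ
    have h1 := (hUnital ξ).sub (hKraus y ξ)
    have h2 : (fun k => star (l k) ((l k) ξ) - star (l k) (y ((l k) ξ)))
        = fun k => star (l k) ((1 - y) ((l k) ξ)) := by
      funext k
      simp [map_sub]
    rw [h2] at h1
    have h3 := (hKraus (1 - y) ξ).unique h1
    rw [h3, hτy]
    simp
  have hziter : ∀ n, τ^[n] (1 - y) = 1 - y := fun n => Function.iterate_fixed hτz n
  -- τ(c • (1 - p)) iterates
  set c : ℂ := ((1 - lam : ℝ) : ℂ) with hc
  have hscale : ∀ w : H →L[ℂ] H, τ (c • (1 - w)) = c • (1 - τ w) := by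
    intro w
    ext ξ
    have h1 := ((hUnital ξ).sub (hKraus w ξ)).const_smul c
    have h2 : (fun k => c • (star (l k) ((l k) ξ) - star (l k) (w ((l k) ξ))))
        = fun k => star (l k) ((c • (1 - w)) ((l k) ξ)) := by
      funext k
      simp [map_sub, map_smul, smul_sub]
    rw [h2] at h1
    have h3 := (hKraus (c • (1 - w)) ξ).unique h1
    rw [h3]
    simp [smul_sub]
  have hiter_scale : ∀ n, τ^[n] (c • (1 - p)) = c • (1 - τ^[n] p) := by
    intro n
    induction n with
    | zero => simp
    | succ n ih =>
      rw [Function.iterate_succ_apply' τ n, ih, hscale, Function.iterate_succ_apply' τ n]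
  -- p ≤ y in form sense
  have hp_le_y : ∀ ξ, Q p ξ ≤ Q y ξ := by
    intro ξ
    have := hle_y 0 ξ
    simpa using this
  -- z := 1 - y kills range of p
  have hQz : ∀ ξ, Q (1 - y) ξ = (@inner ℂ H _ ξ ξ).re - Q y ξ := by
    intro ξ
    simp [hQdef, inner_sub_right, Complex.sub_re]
  have hQz_nonneg : ∀ ξ, 0 ≤ Q (1 - y) ξ := by
    intro ξ
    have h := hy_le.2 ξ
    rw [hreapp] at h
    exact h
  have hQzp0 : ∀ η, Q (1 - y) (p η) = 0 := by
    intro η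
    have h1 : Q p (p η) = (@inner ℂ H _ (p η) (p η)).re := by
      simp only [hQdef]
      rw [hpp η]
    have h2 : Q y (p η) ≤ (@inner ℂ H _ (p η) (p η)).re := by
      have := hQz_nonneg (p η)
      rw [hQz] at this
      linarith
    have h3 := hp_le_y (p η)
    rw [hQz]
    rw [h1] at h3
    linarith
  have hzp : ∀ η, (1 - y) (p η) = 0 := by
    intro η
    set v := p η with hv
    set z := (1 : H →L[ℂ] H) - y with hz
    have hzsa : IsSelfAdjoint z := hy_le.isSelfAdjoint
    -- re ⟪w, z v⟫ = 0 for all w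
    have hre : ∀ w : H, (@inner ℂ H _ w (z v)).re = 0 := by
      intro w
      set cc : ℝ := (@inner ℂ H _ w (z v)).re with hcc
      set d : ℝ := Q z w with hd
      have hd0 : 0 ≤ d := hQz_nonneg w
      have key : ∀ t : ℝ, 0 ≤ 2 * t * cc + t ^ 2 * d := by
        intro t
        have h := hQz_nonneg (v + (t : ℂ) • w)
        have hzlin : z (v + (t : ℂ) • w) = z v + (t : ℂ) • z w := by
          rw [map_add, map_smul]
        have hsw : @inner ℂ H _ v (z w) = (starRingEnd ℂ) (@inner ℂ H _ w (z v)) := by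
          rw [← hsym z hzsa v w, ← inner_conj_symm]
        have hinner : @inner ℂ H _ (v + (t : ℂ) • w) (z (v + (t : ℂ) • w))
            = @inner ℂ H _ v (z v) + (t : ℂ) * ((starRingEnd ℂ) (@inner ℂ H _ w (z v)))
              + (t : ℂ) * @inner ℂ H _ w (z v)
              + ((t * t : ℝ) : ℂ) * @inner ℂ H _ w (z w) := by
          rw [hzlin]
          rw [inner_add_left, inner_add_right, inner_add_right, inner_smul_left,
            inner_smul_right, inner_smul_left, inner_smul_right, hsw]
          rw [Complex.conj_ofReal]
          push_cast
          ring
        have hexp : Q z (v + (t : ℂ) • w) = Q z v + 2 * t * cc + t ^ 2 * d := by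
          have hQr : Q z (v + (t : ℂ) • w)
              = (@inner ℂ H _ (v + (t : ℂ) • w) (z (v + (t : ℂ) • w))).re := by
            simp only [hQdef]
          rw [hQr, hinner]
          simp only [Complex.add_re, Complex.re_ofReal_mul, Complex.conj_re]
          have h1 : Q z v = (@inner ℂ H _ v (z v)).re := by simp only [hQdef]
          have h3 : d = (@inner ℂ H _ w (z w)).re := by rw [hd]
          rw [← h1, ← h3, ← hcc]
          ring
        have hQzv : Q z v = 0 := hQzp0 η
        rw [hexp, hQzv] at h
        linarith
      -- conclude cc = 0
      have h1 := key (-cc / (d + 1))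
      have hdpos : (0:ℝ) < d + 1 := by linarith
      have h4 : 0 ≤ (2 * (-cc / (d + 1)) * cc + (-cc / (d + 1)) ^ 2 * d) * (d + 1) ^ 2 :=
        mul_nonneg h1 (sq_nonneg _)
      have h5 : (2 * (-cc / (d + 1)) * cc + (-cc / (d + 1)) ^ 2 * d) * (d + 1) ^ 2
          = -(cc ^ 2) * (d + 2) := by
        field_simp
        ring
      rw [h5] at h4
      have h6 : cc ^ 2 = 0 := by nlinarith [sq_nonneg cc]
      have h7 : cc = 0 := by
        have := sq_eq_zero_iff.mp h6
        exact this
      exact h7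
    have hfull : ∀ w : H, @inner ℂ H _ w (z v) = 0 := by
      intro w
      have h1 := hre w
      have h2 := hre (Complex.I • w)
      rw [inner_smul_left] at h2
      simp only [Complex.conj_I, neg_mul, Complex.neg_re, Complex.I_mul_re, neg_neg] at h2
      exact Complex.ext h1 h2
    have := hfull (z v)
    rw [inner_self_eq_zero] at this
    exact this
  -- z ≤ c (1 - p) in form sense
  have hz_le : ∀ ξ, Q (1 - y) ξ ≤ Q (c • (1 - p)) ξ := by
    intro ξ
    set z := (1 : H →L[ℂ] H) - y with hzdef
    set u : H := ξ - p ξ with hu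
    have hzsa : IsSelfAdjoint z := hy_le.isSelfAdjoint
    have hzu : z ξ = z u := by
      rw [hu, map_sub]
      rw [hzp ξ]
      simp
    have hsplit : Q z ξ = Q z u := by
      rw [hQdef]
      simp only
      rw [hzu]
      have : @inner ℂ H _ ξ (z u) = @inner ℂ H _ u (z u) + @inner ℂ H _ (p ξ) (z u) := by
        rw [hu]
        rw [inner_sub_left]
        ring
      rw [this]
      have hcross : @inner ℂ H _ (p ξ) (z u) = 0 := by
        rw [← hsym z hzsa (p ξ) u]
        rw [hzp ξ]
        simp
      rw [hcross]
      simp [hQdef]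
    -- bound Q z u
    have hblam2 : ∀ w : H, lam * (@inner ℂ H _ w w).re ≤ Q y w := by
      intro w
      have h := hblam.2 w
      rw [hreapp] at h
      have hexp : Q (y - (lam : ℂ) • 1) w = Q y w - lam * (@inner ℂ H _ w w).re := by
        have happ : (y - (lam : ℂ) • 1) w = y w - (lam : ℂ) • w := by
          simp
        simp only [hQdef, happ, inner_sub_right, inner_smul_right, Complex.sub_re,
          Complex.re_ofReal_mul]
      rw [hexp] at h
      linarith
    have hQzu : Q z u ≤ (1 - lam) * (@inner ℂ H _ u u).re := by
      have h1 := hblam2 u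
      rw [hQz u]
      nlinarith [h1]
    -- identify the right-hand side
    have hru : (@inner ℂ H _ u u).re = (@inner ℂ H _ ξ u).re := by
      rw [hu, inner_sub_left, Complex.sub_re]
      have : (@inner ℂ H _ (p ξ) (ξ - p ξ)).re = 0 := by
        rw [inner_sub_right, Complex.sub_re]
        have h1 : @inner ℂ H _ (p ξ) (p ξ) = @inner ℂ H _ ξ (p (p ξ)) := by
          rw [← hsym p hp_sa ξ (p ξ)]
        rw [h1, hpp ξ]
        have h2 : (@inner ℂ H _ (p ξ) ξ).re = (@inner ℂ H _ ξ (p ξ)).re := by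
          rw [← inner_conj_symm ξ (p ξ), Complex.conj_re]
        rw [h2]
        ring
      rw [this]
      ring
    have hrhs : Q (c • (1 - p)) ξ = (1 - lam) * (@inner ℂ H _ ξ u).re := by
      have happ : (c • ((1 : H →L[ℂ] H) - p)) ξ = c • u := by
        rw [hu]
        simp
      have hstep : Q (c • (1 - p)) ξ = (c * @inner ℂ H _ ξ u).re := by
        simp only [hQdef, happ, inner_smul_right]
      rw [hstep, hc, Complex.re_ofReal_mul]
    rw [hsplit, hrhs, ← hru]
    exact hQzu
  -- main inequality and limit
  have hmain : ∀ ξ, Q (1 - y) ξ ≤ (1 - lam) * Q (1 - y) ξ := by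
    intro ξ
    have hineq : ∀ n, Q (1 - y) ξ ≤ (1 - lam) * ((@inner ℂ H _ ξ ξ).re - Q (τ^[n] p) ξ) := by
      intro n
      have h1 := hQmono_iter (1 - y) (c • (1 - p)) hz_le n ξ
      rw [hziter n, hiter_scale n] at h1
      have h2 : Q (c • (1 - τ^[n] p)) ξ
          = (1 - lam) * ((@inner ℂ H _ ξ ξ).re - Q (τ^[n] p) ξ) := by
        rw [hQdef]
        simp only [ContinuousLinearMap.smul_apply, inner_smul_right,
          ContinuousLinearMap.sub_apply, ContinuousLinearMap.one_apply, inner_sub_right]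
        rw [hc, Complex.re_ofReal_mul, Complex.sub_re]
      rw [h2] at h1
      exact h1
    have hlimit : Filter.Tendsto (fun n => (1 - lam) * ((@inner ℂ H _ ξ ξ).re - Q (τ^[n] p) ξ))
        Filter.atTop (nhds ((1 - lam) * ((@inner ℂ H _ ξ ξ).re - Q y ξ))) :=
      (tendsto_const_nhds.sub (hQlim ξ)).const_mul _
    have := ge_of_tendsto hlimit (Filter.Eventually.of_forall hineq)
    rw [← hQz ξ] at this
    exact this
  have hQz0 : ∀ ξ, Q (1 - y) ξ = 0 := by
    intro ξ
    have h1 := hmain ξ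
    have h2 := hQz_nonneg ξ
    nlinarith
  -- conclude y = 1
  have hz0 : (1 : H →L[ℂ] H) - y = 0 := by
    apply ContinuousLinearMap.coe_injective
    have : (((1 : H →L[ℂ] H) - y : H →L[ℂ] H) : H →ₗ[ℂ] H) = (0 : H →ₗ[ℂ] H) := by
      rw [← inner_map_self_eq_zero]
      intro ξ
      have hre0 : (@inner ℂ H _ ξ (((1 : H →L[ℂ] H) - y) ξ)).re = 0 := hQz0 ξ
      have him0 : (@inner ℂ H _ ξ (((1 : H →L[ℂ] H) - y) ξ)).im = 0 :=
        hreal (1 - y) hy_le.isSelfAdjoint ξ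
      have h0 : @inner ℂ H _ ξ (((1 : H →L[ℂ] H) - y) ξ) = 0 := Complex.ext hre0 him0
      calc @inner ℂ H _ (((1 : H →L[ℂ] H) - y) ξ) ξ
          = (starRingEnd ℂ) (@inner ℂ H _ ξ (((1 : H →L[ℂ] H) - y) ξ)) := by
            rw [inner_conj_symm]
        _ = 0 := by rw [h0]; simp
    exact this
  have := sub_eq_zero.mp hz0
  exact this.symm
end

section
/- An orthogonal projection p ∈ B(H) is sub-harmonic for τ, i.e. τ(p) ≥ p, if and only if (1−p)·l_k·p = 0 for every k. -/
open ContinuousLinearMap RCLike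
open scoped InnerProductSpace ComplexConjugate

/- STATEMENT 7: A projection p is sub-harmonic for τ (τ(p) ≥ p) iff
(1−p)·l_k·p = 0 for every k. -/

theorem subharmonic_iff_kraus_triangular
    {H : Type*} [NormedAddCommGroup H] [InnerProductSpace ℂ H]
    [CompleteSpace H] [TopologicalSpace.SeparableSpace H]
    (τ : (H →L[ℂ] H) → (H →L[ℂ] H)) (l : ℕ → H →L[ℂ] H)
    (hKraus : ∀ (x : H →L[ℂ] H) (ξ : H),
      HasSum (fun k => star (l k) (x ((l k) ξ))) (τ x ξ))
    (hUnital : ∀ ξ : H, HasSum (fun k => star (l k) ((l k) ξ)) ξ)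
    (p : H →L[ℂ] H) (hp_idem : p * p = p) (hp_sa : IsSelfAdjoint p) :
    (τ p - p).IsPositive ↔ ∀ k : ℕ, (1 - p) * l k * p = 0 := by
  have hsym : ∀ x y : H, ⟪p x, y⟫_ℂ = ⟪x, p y⟫_ℂ :=
    (ContinuousLinearMap.isSelfAdjoint_iff_isSymmetric.mp hp_sa)
  have hpp : ∀ v : H, p (p v) = p v := by
    intro v
    conv_rhs => rw [← hp_idem]
    rfl
  -- ⟪v, p v⟫ = ⟪p v, p v⟫
  have hip : ∀ v : H, ⟪v, p v⟫_ℂ = ⟪p v, p v⟫_ℂ := by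
    intro v
    conv_rhs => rw [hsym, hpp]
  have hipre : ∀ v : H, re ⟪v, p v⟫_ℂ = ‖p v‖ ^ 2 := by
    intro v
    rw [hip, inner_self_eq_norm_sq]
  -- pythagoras
  have hnorm : ∀ v : H, ‖v - p v‖ ^ 2 = ‖v‖ ^ 2 - ‖p v‖ ^ 2 := by
    intro v
    rw [@norm_sub_sq ℂ, hipre]
    ring
  have hple : ∀ v : H, ‖p v‖ ^ 2 ≤ ‖v‖ ^ 2 := by
    intro v
    nlinarith [hnorm v, sq_nonneg ‖v - p v‖]
  -- sum of ‖p l_k ξ‖²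
  have hsum_sq : ∀ ξ : H,
      HasSum (fun k => ‖p ((l k) ξ)‖ ^ 2) (re ⟪ξ, τ p ξ⟫_ℂ) := by
    intro ξ
    have h0 := ((hKraus p ξ).mapL (innerSL ℂ ξ)).mapL (RCLike.reCLM (K := ℂ))
    convert h0 using 2 with k
    · rfl
    simp only [innerSL_apply_apply, RCLike.reCLM_apply]
    rw [star_eq_adjoint, adjoint_inner_right, hipre]
    rfl
  have hsum_one : ∀ ξ : H,
      HasSum (fun k => ‖(l k) ξ‖ ^ 2) (‖ξ‖ ^ 2) := by
    intro ξ
    have h0 := ((hUnital ξ).mapL (innerSL ℂ ξ)).mapL (RCLike.reCLM (K := ℂ))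
    have h1 : re ⟪ξ, ξ⟫_ℂ = ‖ξ‖ ^ 2 := inner_self_eq_norm_sq ξ
    rw [show (innerSL ℂ ξ) ξ = ⟪ξ, ξ⟫_ℂ from rfl] at h0
    have h2 : (fun k => RCLike.reCLM (K := ℂ) ((innerSL ℂ ξ) (star (l k) ((l k) ξ))))
        = fun k => ‖(l k) ξ‖ ^ 2 := by
      funext k
      simp only [innerSL_apply_apply, RCLike.reCLM_apply]
      rw [star_eq_adjoint, adjoint_inner_right]
      exact inner_self_eq_norm_sq _
    rw [h2] at h0
    rw [RCLike.reCLM_apply, h1] at h0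
    exact h0
  constructor
  · -- positivity implies triangularity
    intro hpos k
    ext η
    have hpη : p (p η) = p η := hpp η
    set ξ := p η with hξdef
    -- positivity at ξ
    have hpos' : 0 ≤ re ⟪(τ p - p) ξ, ξ⟫_ℂ := hpos.re_inner_nonneg_left ξ
    have hsplit : ⟪(τ p - p) ξ, ξ⟫_ℂ = ⟪τ p ξ, ξ⟫_ℂ - ⟪p ξ, ξ⟫_ℂ := by
      simp [inner_sub_left]
    have hpξ : p ξ = ξ := hpη
    have hge : ‖ξ‖ ^ 2 ≤ re ⟪ξ, τ p ξ⟫_ℂ := by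
      have h1 : re ⟪τ p ξ, ξ⟫_ℂ = re ⟪ξ, τ p ξ⟫_ℂ := inner_re_symm _ _
      have h2 : re ⟪p ξ, ξ⟫_ℂ = ‖ξ‖ ^ 2 := by
        rw [hpξ]; exact inner_self_eq_norm_sq ξ
      rw [hsplit, map_sub, h1, h2] at hpos'
      linarith
    -- termwise comparison
    have hd : HasSum (fun j => ‖(l j) ξ‖ ^ 2 - ‖p ((l j) ξ)‖ ^ 2)
        (‖ξ‖ ^ 2 - re ⟪ξ, τ p ξ⟫_ℂ) := (hsum_one ξ).sub (hsum_sq ξ)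
    have hterm := le_hasSum hd k (fun j _ => by
      have := hple ((l j) ξ); linarith)
    have hzero : ‖(l k) ξ‖ ^ 2 - ‖p ((l k) ξ)‖ ^ 2 = 0 := by
      have h3 := hple ((l k) ξ)
      have : ‖(l k) ξ‖ ^ 2 - ‖p ((l k) ξ)‖ ^ 2 ≤ 0 := le_trans hterm (by linarith)
      linarith
    have h4 : ‖(l k) ξ - p ((l k) ξ)‖ ^ 2 = 0 := by rw [hnorm]; linarith
    have h5 : (l k) ξ - p ((l k) ξ) = 0 := by
      have := pow_eq_zero_iff (n := 2) (by norm_num) |>.mp h4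
      exact norm_eq_zero.mp this
    show ((1 - p) * l k * p) η = (0 : H →L[ℂ] H) η
    simp only [ContinuousLinearMap.mul_apply, ContinuousLinearMap.sub_apply,
      ContinuousLinearMap.one_apply, ContinuousLinearMap.zero_apply]
    exact h5
  · -- triangularity implies positivity
    intro h
    -- l k (p v) = p (l k (p v))
    have hlp : ∀ (k : ℕ) (v : H), p ((l k) (p v)) = (l k) (p v) := by
      intro k v
      have h0 := congrArg (fun T : H →L[ℂ] H => T v) (h k)
      simp only [ContinuousLinearMap.mul_apply, ContinuousLinearMap.sub_apply,
        ContinuousLinearMap.one_apply, ContinuousLinearMap.zero_apply] at h0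
      linear_combination (norm := abel) -h0
    -- p (l k)* (p w) = p (l k)* w
    have hstar : ∀ (k : ℕ) (w : H), p (star (l k) (p w)) = p (star (l k) w) := by
      intro k w
      have h0 := congrArg star (h k)
      rw [star_mul, star_mul, star_zero, hp_sa.star_eq] at h0
      have h1 : star ((1 : H →L[ℂ] H) - p) = 1 - p := by
        rw [star_sub, star_one, hp_sa.star_eq]
      rw [h1] at h0
      have h2 := congrArg (fun T : H →L[ℂ] H => T w) h0
      simp only [ContinuousLinearMap.mul_apply, ContinuousLinearMap.sub_apply,
        ContinuousLinearMap.one_apply, ContinuousLinearMap.zero_apply] at h2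
      have h3 : p (star (l k) w) - p (star (l k) (p w)) = 0 := by
        simpa [map_sub] using h2
      linear_combination (norm := abel) -h3
    -- τ p (p x) = p x
    have hτpp : ∀ x : H, τ p (p x) = p x := by
      intro x
      have A := hKraus p (p x)
      have B := hUnital (p x)
      have : (fun k => star (l k) (p ((l k) (p x))))
          = fun k => star (l k) ((l k) (p x)) := by
        funext k; rw [hlp k x]
      rw [this] at A
      exact A.unique B
    -- p (τ p x) = p x
    have hpτp : ∀ x : H, p (τ p x) = p x := by
      intro x
      have A := (hKraus p x).mapL p
      have B := (hUnital x).mapL p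
      have : (fun k => p (star (l k) (p ((l k) x))))
          = fun k => p (star (l k) ((l k) x)) := by
        funext k; rw [hstar k]
      rw [this] at A
      exact A.unique B
    -- symmetry of τ p
    have hτsym : ∀ x y : H, ⟪τ p x, y⟫_ℂ = ⟪x, τ p y⟫_ℂ := by
      intro x y
      have C1 := (hKraus p y).mapL (innerSL ℂ x)
      have C2 := (hKraus p x).mapL (innerSL ℂ y)
      have C2' := C2.mapL (Complex.conjCLE.toContinuousLinearMap)
      have hterm : (fun k => Complex.conjCLE.toContinuousLinearMap
          ((innerSL ℂ y) (star (l k) (p ((l k) x)))))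
          = fun k => (innerSL ℂ x) (star (l k) (p ((l k) y))) := by
        funext k
        simp only [ContinuousLinearEquiv.coe_coe, Complex.conjCLE_apply, innerSL_apply_apply,
          star_eq_adjoint, adjoint_inner_right]
        rw [inner_conj_symm, hsym]
      rw [hterm] at C2'
      have := C2'.unique C1
      calc ⟪τ p x, y⟫_ℂ = conj ⟪y, τ p x⟫_ℂ := by rw [inner_conj_symm]
        _ = ⟪x, τ p y⟫_ℂ := by
            simpa only [ContinuousLinearEquiv.coe_coe, Complex.conjCLE_apply,
              innerSL_apply_apply] using this
    -- self-adjointness of τ p - p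
    have hsa : IsSelfAdjoint (τ p - p) := by
      rw [ContinuousLinearMap.isSelfAdjoint_iff_isSymmetric]
      intro x y
      show ⟪(τ p - p) x, y⟫_ℂ = ⟪x, (τ p - p) y⟫_ℂ
      simp only [ContinuousLinearMap.sub_apply, inner_sub_left, inner_sub_right]
      rw [hτsym, hsym]
    refine ⟨ContinuousLinearMap.isSelfAdjoint_iff_isSymmetric.mp hsa, fun x => ?_⟩
    rw [ContinuousLinearMap.reApplyInnerSelf_apply]
    set y := x - p x with hy
    have hpy : p y = 0 := by simp [hy, map_sub, hpp]
    have key : (τ p - p) x = τ p y := by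
      have : τ p y = τ p x - p x := by
        rw [hy, map_sub, hτpp]
      simp [ContinuousLinearMap.sub_apply, this]
    rw [key]
    have h1 : ⟪τ p y, x⟫_ℂ = ⟪τ p y, y⟫_ℂ + ⟪τ p y, p x⟫_ℂ := by
      rw [← inner_add_right]
      congr 1
      simp [hy]
    have h2 : ⟪τ p y, p x⟫_ℂ = 0 := by
      rw [← hsym, hpτp, hpy, inner_zero_left]
    have h3 : 0 ≤ re ⟪y, τ p y⟫_ℂ := (hsum_sq y).nonneg (fun k => sq_nonneg _)
    rw [h1, h2, add_zero, inner_re_symm]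
    exact h3
end

section
/- Let p be a sub-harmonic projection for τ and let y be the strong limit of τ^n(p). Then for any z ∈ B(H), y·z = 0 if and only if p·z = 0 and p·l_{i_1}·l_{i_2}·⋯·l_{i_n}·z = 0 for every n ≥ 1 and all indices i_1, …, i_n ∈ ℕ. -/
set_option synthInstance.maxHeartbeats 1000000
set_option maxHeartbeats 1000000

open ContinuousLinearMap RCLike

section Aux

variable {H : Type*} [NormedAddCommGroup H] [InnerProductSpace ℂ H] [CompleteSpace H]

private lemma aux_inner_self {s : H →L[ℂ] H} (hs : IsSelfAdjoint s) (η : H) :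
    (inner ℂ (s (s η)) η : ℂ) = inner ℂ (s η) (s η) := by
  have h := ContinuousLinearMap.adjoint_inner_left s η (s η)
  rwa [hs.adjoint_eq] at h

private lemma aux_pos_apply_eq_zero_s8 {a : H →L[ℂ] H} (ha : a.IsPositive) {η : H}
    (h : re (inner ℂ (a η) η : ℂ) = 0) : a η = 0 := by
  have ha' : (0 : H →L[ℂ] H) ≤ a := (nonneg_iff_isPositive a).mpr ha
  have hss : CFC.sqrt a * CFC.sqrt a = a := CFC.sqrt_mul_sqrt_self a ha'
  have hsa : IsSelfAdjoint (CFC.sqrt a) := .of_nonneg (CFC.sqrt_nonneg a)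
  have h1 : (inner ℂ (a η) η : ℂ) = inner ℂ (CFC.sqrt a η) (CFC.sqrt a η) := by
    conv_lhs => rw [← hss]
    rw [ContinuousLinearMap.mul_apply]
    exact aux_inner_self hsa η
  have h2 : ‖CFC.sqrt a η‖ ^ 2 = 0 := by
    rw [← inner_self_eq_norm_sq (𝕜 := ℂ), ← h1, h]
  have h3 : CFC.sqrt a η = 0 :=
    norm_eq_zero.mp (pow_eq_zero_iff (by norm_num : (2:ℕ) ≠ 0) |>.mp h2)
  calc a η = CFC.sqrt a (CFC.sqrt a η) := by rw [← ContinuousLinearMap.mul_apply, hss]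
  _ = 0 := by rw [h3, map_zero]

variable {τ : (H →L[ℂ] H) → (H →L[ℂ] H)} {l : ℕ → H →L[ℂ] H}
  (hKraus : ∀ (x : H →L[ℂ] H) (ξ : H),
      HasSum (fun k => star (l k) (x ((l k) ξ))) (τ x ξ))

include hKraus

private lemma aux_hasSum_inner (x : H →L[ℂ] H) (ξ : H) :
    HasSum (fun k => (inner ℂ ((l k) ξ) (x ((l k) ξ)) : ℂ)) (inner ℂ ξ (τ x ξ)) := by
  have h := (hKraus x ξ).mapL (innerSL ℂ ξ)
  simpa [star_eq_adjoint, adjoint_inner_right] using h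

private lemma aux_tau_pos {x : H →L[ℂ] H} (hx : x.IsPositive) : (τ x).IsPositive := by
  rw [isPositive_iff_complex]
  intro ξ
  have hx' := (isPositive_iff_complex x).mp hx
  have hC := aux_hasSum_inner hKraus x ξ
  have hterm : ∀ k : ℕ, (inner ℂ ((l k) ξ) (x ((l k) ξ)) : ℂ)
      = ((re (inner ℂ (x ((l k) ξ)) ((l k) ξ) : ℂ) : ℝ) : ℂ) := by
    intro k
    calc (inner ℂ ((l k) ξ) (x ((l k) ξ)) : ℂ)
        = starRingEnd ℂ (inner ℂ (x ((l k) ξ)) ((l k) ξ)) := (inner_conj_symm _ _).symm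
      _ = starRingEnd ℂ ((re (inner ℂ (x ((l k) ξ)) ((l k) ξ) : ℂ) : ℝ) : ℂ) :=
          congrArg _ (hx' ((l k) ξ)).1.symm
      _ = _ := Complex.conj_ofReal _
  rw [funext hterm] at hC
  have hR : HasSum (fun k : ℕ => re (inner ℂ (x ((l k) ξ)) ((l k) ξ) : ℂ))
      (re (inner ℂ ξ (τ x ξ) : ℂ)) := by
    simpa using hC.mapL Complex.reCLM
  have hC' := hR.mapL Complex.ofRealCLM
  have huniq : (inner ℂ ξ (τ x ξ) : ℂ) = ((re (inner ℂ ξ (τ x ξ) : ℂ) : ℝ) : ℂ) :=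
    hC.unique (by simpa using hC')
  have hnn : 0 ≤ re (inner ℂ ξ (τ x ξ) : ℂ) :=
    hR.nonneg fun k => (hx' ((l k) ξ)).2
  have hflip : (inner ℂ (τ x ξ) ξ : ℂ) = ((re (inner ℂ ξ (τ x ξ) : ℂ) : ℝ) : ℂ) := by
    calc (inner ℂ (τ x ξ) ξ : ℂ)
        = starRingEnd ℂ (inner ℂ ξ (τ x ξ)) := (inner_conj_symm _ _).symm
      _ = starRingEnd ℂ ((re (inner ℂ ξ (τ x ξ) : ℂ) : ℝ) : ℂ) := congrArg _ huniq
      _ = _ := Complex.conj_ofReal _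
  constructor
  · rw [hflip]; simp
  · rw [inner_re_symm]; exact hnn

private lemma aux_hasSum_re (x : H →L[ℂ] H) (ξ : H) :
    HasSum (fun k => re (inner ℂ (x ((l k) ξ)) ((l k) ξ) : ℂ))
      (re (inner ℂ (τ x ξ) ξ : ℂ)) := by
  have h := (aux_hasSum_inner hKraus x ξ).mapL Complex.reCLM
  simpa [inner_re_symm] using h

private lemma aux_step {x : H →L[ℂ] H} (hx : x.IsPositive) (z : H →L[ℂ] H) :
    τ x * z = 0 ↔ ∀ k, x * (l k * z) = 0 := by
  constructor
  · intro h k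
    ext ξ
    simp only [ContinuousLinearMap.mul_apply, zero_apply]
    apply aux_pos_apply_eq_zero_s8 hx
    have hs := aux_hasSum_re hKraus x (z ξ)
    have hzero : τ x (z ξ) = 0 := by
      have := congrArg (fun T => T ξ) h
      simpa [ContinuousLinearMap.mul_apply] using this
    rw [hzero] at hs
    simp only [inner_zero_left, map_zero] at hs
    have hle := le_hasSum hs k (fun j _ => hx.re_inner_nonneg_left ((l j) (z ξ)))
    exact le_antisymm hle (hx.re_inner_nonneg_left ((l k) (z ξ)))
  · intro h
    ext ξ
    simp only [ContinuousLinearMap.mul_apply, zero_apply]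
    have hK := hKraus x (z ξ)
    have hz : ∀ k : ℕ, star (l k) (x ((l k) (z ξ))) = 0 := by
      intro k
      have := congrArg (fun T => T ξ) (h k)
      simp only [ContinuousLinearMap.mul_apply, zero_apply] at this
      rw [this, map_zero]
    rw [funext hz] at hK
    exact hK.unique hasSum_zero

private lemma aux_tau_sub (a b : H →L[ℂ] H) : τ b - τ a = τ (b - a) := by
  ext ξ
  have h1 : HasSum (fun k => star (l k) ((b - a) ((l k) ξ))) (τ b ξ - τ a ξ) := by
    have := (hKraus b ξ).sub (hKraus a ξ)
    simpa [map_sub] using this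
  simpa using h1.unique (hKraus (b - a) ξ)

end Aux

theorem strong_limit_annihilates_iff_words_annihilate
    {H : Type*} [NormedAddCommGroup H] [InnerProductSpace ℂ H]
    [CompleteSpace H] [TopologicalSpace.SeparableSpace H]
    (τ : (H →L[ℂ] H) → (H →L[ℂ] H)) (l : ℕ → H →L[ℂ] H)
    (hKraus : ∀ (x : H →L[ℂ] H) (ξ : H),
      HasSum (fun k => star (l k) (x ((l k) ξ))) (τ x ξ))
    (hUnital : ∀ ξ : H, HasSum (fun k => star (l k) ((l k) ξ)) ξ)
    (p : H →L[ℂ] H) (hp_idem : p * p = p) (hp_sa : IsSelfAdjoint p)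
    (hp_sub : (τ p - p).IsPositive)
    (y : H →L[ℂ] H) (hy_pos : y.IsPositive) (hy_le : (1 - y).IsPositive)
    (hy_lim : ∀ ξ : H, Filter.Tendsto (fun n => (τ^[n] p) ξ)
      Filter.atTop (nhds (y ξ))) :
    ∀ z : H →L[ℂ] H, y * z = 0 ↔
      (p * z = 0 ∧ ∀ (n : ℕ) (i : Fin (n + 1) → ℕ),
        p * (List.ofFn fun j => l (i j)).prod * z = 0) := by
  -- p is positive
  have hp_pos : p.IsPositive := by
    refine ⟨hp_sa.isSymmetric, fun ξ => ?_⟩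
    have h1 : (inner ℂ (p ξ) ξ : ℂ) = inner ℂ (p ξ) (p ξ) := by
      conv_lhs => rw [← hp_idem]
      rw [ContinuousLinearMap.mul_apply]
      exact aux_inner_self hp_sa ξ
    rw [ContinuousLinearMap.reApplyInnerSelf_apply, h1, inner_self_eq_norm_sq]
    positivity
  -- all iterates are positive
  have pos_n : ∀ n, (τ^[n] p).IsPositive := by
    intro n
    induction n with
    | zero => simpa using hp_pos
    | succ n ih =>
      rw [Function.iterate_succ_apply']
      exact aux_tau_pos hKraus ih
  -- monotonicity
  have tau_mono : ∀ a b : H →L[ℂ] H, a ≤ b → τ a ≤ τ b := by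
    intro a b hab
    rw [ContinuousLinearMap.le_def, aux_tau_sub hKraus]
    exact aux_tau_pos hKraus ((ContinuousLinearMap.le_def a b).mp hab)
  have mono : Monotone fun n => τ^[n] p := by
    apply monotone_nat_of_le_succ
    intro n
    induction n with
    | zero =>
      rw [ContinuousLinearMap.le_def]
      simpa using hp_sub
    | succ n ih =>
      rw [Function.iterate_succ_apply' τ n p, Function.iterate_succ_apply' τ (n + 1) p]
      exact tau_mono _ _ ih
  -- re-inner against each iterate is bounded by that of y
  have le_y : ∀ n, ((y - τ^[n] p) : H →L[ℂ] H).IsPositive := by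
    intro n
    constructor
    · exact (hy_pos.isSelfAdjoint.sub (pos_n n).isSelfAdjoint).isSymmetric
    · intro ξ
      rw [ContinuousLinearMap.reApplyInnerSelf_apply]
      have ht : Filter.Tendsto (fun m => re (inner ℂ ((τ^[m] p) ξ) ξ : ℂ))
          Filter.atTop (nhds (re (inner ℂ (y ξ) ξ : ℂ))) := by
        have h1 : Filter.Tendsto (fun m => (inner ℂ ((τ^[m] p) ξ) ξ : ℂ))
            Filter.atTop (nhds (inner ℂ (y ξ) ξ)) :=
          (hy_lim ξ).inner tendsto_const_nhds
        exact (RCLike.continuous_re.tendsto _).comp h1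
      have hb : ∀ m ≥ n, re (inner ℂ ((τ^[n] p) ξ) ξ : ℂ)
          ≤ re (inner ℂ ((τ^[m] p) ξ) ξ : ℂ) := by
        intro m hm
        have hmn := (mono hm).2 ξ
        rw [ContinuousLinearMap.reApplyInnerSelf_apply] at hmn
        simp only [ContinuousLinearMap.sub_apply, inner_sub_left, map_sub] at hmn
        linarith
      have hle : re (inner ℂ ((τ^[n] p) ξ) ξ : ℂ) ≤ re (inner ℂ (y ξ) ξ : ℂ) :=
        ge_of_tendsto ht (Filter.eventually_atTop.mpr ⟨n, hb⟩)
      simp only [ContinuousLinearMap.sub_apply, inner_sub_left, map_sub]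
      linarith
  -- word characterization of iterates
  have words : ∀ n (z : H →L[ℂ] H), (τ^[n] p) * z = 0 ↔
      ∀ i : Fin n → ℕ, p * (List.ofFn fun j => l (i j)).prod * z = 0 := by
    intro n
    induction n with
    | zero =>
      intro z
      simp only [Function.iterate_zero, id_eq]
      constructor
      · intro h i; simpa using h
      · intro h; simpa using h (fun j => j.elim0)
    | succ n ih =>
      intro z
      rw [Function.iterate_succ_apply', aux_step hKraus (pos_n n)]
      constructor
      · intro h i
        have h2 := (ih (l (i (Fin.last n)) * z)).mp (h (i (Fin.last n)))
          (fun m => i m.castSucc)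
        rw [List.ofFn_succ']
        simpa [List.prod_concat, mul_assoc] using h2
      · intro h k
        rw [ih]
        intro i
        have h2 := h (Fin.snoc i k)
        rw [List.ofFn_succ'] at h2
        simpa [List.prod_concat, mul_assoc] using h2
  intro z
  constructor
  · intro h
    have claim : ∀ n, (τ^[n] p) * z = 0 := by
      intro n
      ext ξ
      simp only [ContinuousLinearMap.mul_apply, ContinuousLinearMap.zero_apply]
      apply aux_pos_apply_eq_zero_s8 (pos_n n)
      have hy0 : y (z ξ) = 0 := by
        have := congrArg (fun T => T ξ) h
        simpa [ContinuousLinearMap.mul_apply] using this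
      have h1 := (le_y n).re_inner_nonneg_left (z ξ)
      simp only [ContinuousLinearMap.sub_apply, inner_sub_left, map_sub, hy0,
        inner_zero_left, map_zero] at h1
      have h2 := (pos_n n).re_inner_nonneg_left (z ξ)
      linarith
    refine ⟨by simpa using claim 0, fun n i => (words (n + 1) z).mp (claim (n + 1)) i⟩
  · rintro ⟨h0, hw⟩
    have claim : ∀ n, (τ^[n] p) * z = 0 := by
      intro n
      cases n with
      | zero => simpa using h0
      | succ n => exact (words (n + 1) z).mpr (hw n)
    ext ξ
    simp only [ContinuousLinearMap.mul_apply, ContinuousLinearMap.zero_apply]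
    have ht : Filter.Tendsto (fun n => (τ^[n] p) (z ξ)) Filter.atTop (nhds 0) := by
      have hz : ∀ n, (τ^[n] p) (z ξ) = 0 := by
        intro n
        have := congrArg (fun T => T ξ) (claim n)
        simpa [ContinuousLinearMap.mul_apply] using this
      rw [funext hz]
      exact tendsto_const_nhds
    exact tendsto_nhds_unique (hy_lim (z ξ)) ht
end

section
/- Suppose H is finite dimensional. Let p be a sub-harmonic projection for τ and let y = lim_{n→∞} τ^n(p). If y is injective, then y = 1 (i.e. every metastable projection is transient in finite dimensions). -/
open scoped InnerProductSpace ComplexConjugate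
open ContinuousLinearMap Filter

section Aux

variable {H : Type*} [NormedAddCommGroup H] [InnerProductSpace ℂ H]
  [FiniteDimensional ℂ H]

variable (τ : (H →L[ℂ] H) → (H →L[ℂ] H)) (l : ℕ → H →L[ℂ] H)

private lemma kraus_inner
    (hKraus : ∀ (x : H →L[ℂ] H) (ξ : H),
      HasSum (fun k => star (l k) (x ((l k) ξ))) (τ x ξ))
    (x : H →L[ℂ] H) (ξ η : H) :
    HasSum (fun k => ⟪(l k) ξ, x ((l k) η)⟫_ℂ) ⟪ξ, τ x η⟫_ℂ := by
  have h := (hKraus x η).mapL (innerSL ℂ ξ)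
  simpa [ContinuousLinearMap.star_eq_adjoint,
    ContinuousLinearMap.adjoint_inner_right] using h

private lemma unital_inner
    (hUnital : ∀ ξ : H, HasSum (fun k => star (l k) ((l k) ξ)) ξ)
    (ξ η : H) :
    HasSum (fun k => ⟪(l k) ξ, (l k) η⟫_ℂ) ⟪ξ, η⟫_ℂ := by
  have h := (hUnital η).mapL (innerSL ℂ ξ)
  simpa [ContinuousLinearMap.star_eq_adjoint,
    ContinuousLinearMap.adjoint_inner_right] using h

private lemma tau_sub_apply
    (hKraus : ∀ (x : H →L[ℂ] H) (ξ : H),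
      HasSum (fun k => star (l k) (x ((l k) ξ))) (τ x ξ))
    (a b : H →L[ℂ] H) (ξ : H) :
    τ (a - b) ξ = τ a ξ - τ b ξ :=
  (hKraus (a - b) ξ).unique (by
    simpa [ContinuousLinearMap.sub_apply, map_sub] using
      (hKraus a ξ).sub (hKraus b ξ))

private lemma tau_one_apply
    (hKraus : ∀ (x : H →L[ℂ] H) (ξ : H),
      HasSum (fun k => star (l k) (x ((l k) ξ))) (τ x ξ))
    (hUnital : ∀ ξ : H, HasSum (fun k => star (l k) ((l k) ξ)) ξ)
    (ξ : H) : τ 1 ξ = ξ :=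
  (hKraus 1 ξ).unique (by simpa using hUnital ξ)

private lemma tau_smul_one_apply
    (hKraus : ∀ (x : H →L[ℂ] H) (ξ : H),
      HasSum (fun k => star (l k) (x ((l k) ξ))) (τ x ξ))
    (hUnital : ∀ ξ : H, HasSum (fun k => star (l k) ((l k) ξ)) ξ)
    (s : ℂ) (ξ : H) : τ (s • 1) ξ = s • ξ :=
  (hKraus (s • 1) ξ).unique (by
    simpa [map_smul] using (hUnital ξ).const_smul s)

/-- τ maps positive operators to positive operators. -/
private lemma tau_pos
    (hKraus : ∀ (x : H →L[ℂ] H) (ξ : H),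
      HasSum (fun k => star (l k) (x ((l k) ξ))) (τ x ξ))
    {x : H →L[ℂ] H} (hx : x.IsPositive) : (τ x).IsPositive := by
  constructor
  · intro ξ η
    have hsym := (isSelfAdjoint_iff_isSymmetric.mp hx.isSelfAdjoint)
    have h1 : HasSum (fun k => ⟪(l k) η, x ((l k) ξ)⟫_ℂ) ⟪η, τ x ξ⟫_ℂ :=
      kraus_inner τ l hKraus x η ξ
    have h2 : HasSum (fun k => ⟪(l k) ξ, x ((l k) η)⟫_ℂ) ⟪ξ, τ x η⟫_ℂ :=
      kraus_inner τ l hKraus x ξ η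
    have h3 := h1.star
    simp only [Complex.star_def] at h3
    have heq : (fun k => (starRingEnd ℂ) ⟪(l k) η, x ((l k) ξ)⟫_ℂ)
        = fun k => ⟪(l k) ξ, x ((l k) η)⟫_ℂ := by
      funext k
      rw [inner_conj_symm]
      exact hsym ((l k) ξ) ((l k) η)
    rw [heq] at h3
    have h4 := h3.unique h2
    rw [← inner_conj_symm]
    exact h4
  · intro ξ
    have h1 : HasSum (fun k => ⟪(l k) ξ, x ((l k) ξ)⟫_ℂ) ⟪ξ, τ x ξ⟫_ℂ :=
      kraus_inner τ l hKraus x ξ ξ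
    have h2 := h1.mapL Complex.reCLM
    have h0 : (0:ℝ) ≤ Complex.reCLM ⟪ξ, τ x ξ⟫_ℂ :=
      hasSum_le (fun k => by
        simpa [inner_re_symm] using hx.re_inner_nonneg_right ((l k) ξ)) hasSum_zero h2
    rw [reApplyInnerSelf, inner_re_symm]
    exact h0

/-- τ is monotone for the Loewner order. -/
private lemma tau_mono
    (hKraus : ∀ (x : H →L[ℂ] H) (ξ : H),
      HasSum (fun k => star (l k) (x ((l k) ξ))) (τ x ξ))
    {a b : H →L[ℂ] H} (hab : a ≤ b) : τ a ≤ τ b := by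
  rw [ContinuousLinearMap.le_def] at hab ⊢
  have := tau_pos τ l hKraus hab
  have hrw : τ b - τ a = τ (b - a) := by
    ext ξ
    simp [tau_sub_apply τ l hKraus b a ξ]
  rwa [hrw]

private lemma tau_iter_mono
    (hKraus : ∀ (x : H →L[ℂ] H) (ξ : H),
      HasSum (fun k => star (l k) (x ((l k) ξ))) (τ x ξ))
    {a b : H →L[ℂ] H} (hab : a ≤ b) (n : ℕ) : τ^[n] a ≤ τ^[n] b := by
  induction n with
  | zero => simpa using hab
  | succ n ih =>
      rw [Function.iterate_succ_apply', Function.iterate_succ_apply']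
      exact tau_mono τ l hKraus ih

set_option synthInstance.maxHeartbeats 1000000 in
set_option maxHeartbeats 1000000 in
/-- If `0 ≤ A` and the quadratic form of `A` vanishes at `ξ`, then `A ξ = 0`. -/
private lemma apply_eq_zero_of_isPositive
    {A : H →L[ℂ] H} (hA : A.IsPositive) {ξ : H}
    (h : ⟪ξ, A ξ⟫_ℂ = 0) : A ξ = 0 := by
  have h0 : (0 : H →L[ℂ] H) ≤ A := (ContinuousLinearMap.nonneg_iff_isPositive A).mpr hA
  have hs : CFC.sqrt A * CFC.sqrt A = A := CFC.sqrt_mul_sqrt_self A h0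
  have hsa : IsSelfAdjoint (CFC.sqrt A) := .of_nonneg (CFC.sqrt_nonneg A)
  have hsym := isSelfAdjoint_iff_isSymmetric.mp hsa
  have hz : ⟪CFC.sqrt A ξ, CFC.sqrt A ξ⟫_ℂ = 0 := by
    have h5 : ⟪CFC.sqrt A ξ, CFC.sqrt A ξ⟫_ℂ = ⟪ξ, CFC.sqrt A (CFC.sqrt A ξ)⟫_ℂ :=
      hsym ξ (CFC.sqrt A ξ)
    rw [h5, ← ContinuousLinearMap.mul_apply, hs, h]
  have hz2 : CFC.sqrt A ξ = 0 := inner_self_eq_zero.mp hz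
  rw [← hs, ContinuousLinearMap.mul_apply, hz2, map_zero]

/-- Positivity is preserved by limits. -/
private lemma isPositive_of_tendsto
    {f : ℕ → H →L[ℂ] H} {g : H →L[ℂ] H}
    (hf : ∀ n, (f n).IsPositive)
    (hlim : Filter.Tendsto f Filter.atTop (nhds g)) : g.IsPositive := by
  constructor
  · have hstar : Filter.Tendsto (fun n => star (f n)) Filter.atTop (nhds (star g)) :=
      hlim.star
    have heq : (fun n => star (f n)) = f := funext fun n => (hf n).isSelfAdjoint.star_eq
    rw [heq] at hstar
    exact isSelfAdjoint_iff_isSymmetric.mp (tendsto_nhds_unique hstar hlim)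
  · intro ξ
    have happ : Filter.Tendsto (fun n => (f n) ξ) Filter.atTop (nhds (g ξ)) :=
      ((ContinuousLinearMap.apply ℂ H ξ).continuous.tendsto g).comp hlim
    have hre : Filter.Tendsto (fun n => RCLike.re ⟪(f n) ξ, ξ⟫_ℂ)
        Filter.atTop (nhds (RCLike.re ⟪g ξ, ξ⟫_ℂ)) :=
      (RCLike.continuous_re.tendsto _).comp ((happ.inner tendsto_const_nhds))
    exact le_of_tendsto_of_tendsto tendsto_const_nhds hre
      (Filter.Eventually.of_forall fun n => (hf n).2 ξ)

private lemma le_of_tendsto_le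
    {f : ℕ → H →L[ℂ] H} {g a : H →L[ℂ] H}
    (hf : ∀ n, a ≤ f n)
    (hlim : Filter.Tendsto f Filter.atTop (nhds g)) : a ≤ g := by
  rw [ContinuousLinearMap.le_def]
  exact isPositive_of_tendsto (fun n => (ContinuousLinearMap.le_def a (f n)).mp (hf n))
    (hlim.sub tendsto_const_nhds)

private lemma ge_of_tendsto_ge
    {f : ℕ → H →L[ℂ] H} {g b : H →L[ℂ] H}
    (hf : ∀ n, f n ≤ b)
    (hlim : Filter.Tendsto f Filter.atTop (nhds g)) : g ≤ b := by
  rw [ContinuousLinearMap.le_def]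
  exact isPositive_of_tendsto (fun n => (ContinuousLinearMap.le_def (f n) b).mp (hf n))
    (tendsto_const_nhds.sub hlim)

/-- A self-adjoint operator has real diagonal matrix elements. -/
private lemma inner_self_real_of_sa {T : H →L[ℂ] H} (hT : IsSelfAdjoint T) (ξ : H) :
    (⟪ξ, T ξ⟫_ℂ) = ((⟪ξ, T ξ⟫_ℂ).re : ℂ) := by
  have hsym := isSelfAdjoint_iff_isSymmetric.mp hT
  have : (starRingEnd ℂ) ⟪ξ, T ξ⟫_ℂ = ⟪ξ, T ξ⟫_ℂ := by
    rw [inner_conj_symm]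
    exact hsym ξ ξ
  rw [Complex.conj_eq_iff_re] at this
  exact this.symm

/-- A self-adjoint operator is dominated by its norm times the identity. -/
private lemma sa_le_norm_smul_one {T : H →L[ℂ] H} (hT : IsSelfAdjoint T) :
    T ≤ (‖T‖ : ℂ) • 1 := by
  rw [ContinuousLinearMap.le_def]
  constructor
  · have h1 : IsSelfAdjoint ((‖T‖ : ℂ) • (1 : H →L[ℂ] H)) := by
      rw [IsSelfAdjoint, star_smul, star_one, Complex.star_def, Complex.conj_ofReal]
    exact isSelfAdjoint_iff_isSymmetric.mp (h1.sub hT)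
  · intro ξ
    rw [reApplyInnerSelf]
    have h2 : RCLike.re ⟪T ξ, ξ⟫_ℂ ≤ ‖T‖ * ‖ξ‖ ^ 2 := by
      calc RCLike.re ⟪T ξ, ξ⟫_ℂ ≤ ‖⟪T ξ, ξ⟫_ℂ‖ := RCLike.re_le_norm _
      _ ≤ ‖T ξ‖ * ‖ξ‖ := norm_inner_le_norm _ _
      _ ≤ ‖T‖ * ‖ξ‖ * ‖ξ‖ := by
          gcongr
          exact T.le_opNorm ξ
      _ = ‖T‖ * ‖ξ‖ ^ 2 := by ring
    have h3 : RCLike.re ⟪((‖T‖ : ℂ) • (1 : H →L[ℂ] H) - T) ξ, ξ⟫_ℂ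
        = ‖T‖ * ‖ξ‖ ^ 2 - RCLike.re ⟪T ξ, ξ⟫_ℂ := by
      simp only [ContinuousLinearMap.sub_apply, ContinuousLinearMap.smul_apply,
        ContinuousLinearMap.one_apply, inner_sub_left, inner_smul_left, map_sub,
        Complex.conj_ofReal]
      congr 1
      rw [inner_self_eq_norm_sq_to_K]
      rw [RCLike.re_to_complex, Complex.re_ofReal_mul]
      norm_cast
    rw [h3]
    linarith

/-- A self-adjoint idempotent is positive. -/
private lemma proj_isPositive {q : H →L[ℂ] H} (hq : q * q = q) (hqsa : IsSelfAdjoint q) :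
    q.IsPositive := by
  refine ⟨isSelfAdjoint_iff_isSymmetric.mp hqsa, fun ξ => ?_⟩
  have hsym := isSelfAdjoint_iff_isSymmetric.mp hqsa
  rw [reApplyInnerSelf]
  have h1 : q (q ξ) = q ξ := by
    rw [← ContinuousLinearMap.mul_apply, hq]
  have h2 : ⟪q (q ξ), ξ⟫_ℂ = ⟪q ξ, q ξ⟫_ℂ := hsym (q ξ) ξ
  rw [← h1, h2]
  exact inner_self_nonneg

end Aux

/- STATEMENT 11: H finite dimensional, p sub-harmonic, y = lim τ^n(p).
If y is injective then y = 1. -/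

set_option synthInstance.maxHeartbeats 1000000 in
set_option maxHeartbeats 1600000 in
theorem finiteDim_metastable_is_transient
    {H : Type*} [NormedAddCommGroup H] [InnerProductSpace ℂ H]
    [FiniteDimensional ℂ H]
    (τ : (H →L[ℂ] H) → (H →L[ℂ] H)) (l : ℕ → H →L[ℂ] H)
    (hKraus : ∀ (x : H →L[ℂ] H) (ξ : H),
      HasSum (fun k => star (l k) (x ((l k) ξ))) (τ x ξ))
    (hUnital : ∀ ξ : H, HasSum (fun k => star (l k) ((l k) ξ)) ξ)
    (p : H →L[ℂ] H) (hp_idem : p * p = p) (hp_sa : IsSelfAdjoint p)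
    (hp_sub : (τ p - p).IsPositive)
    (y : H →L[ℂ] H)
    (hy_lim : Filter.Tendsto (fun n => τ^[n] p) Filter.atTop (nhds y))
    (hy_inj : Function.Injective y) :
    y = 1 := by
  rcases subsingleton_or_nontrivial H with hS | hNT
  · ext ξ
    exact Subsingleton.elim _ _
  -- basic facts about p
  have hsymp := isSelfAdjoint_iff_isSymmetric.mp hp_sa
  have hp1 : p ≤ 1 := by
    rw [ContinuousLinearMap.le_def]
    refine proj_isPositive ?_ ?_
    · calc (1 - p) * (1 - p) = 1 - p - (p - p * p) := by noncomm_ring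
      _ = 1 - p := by rw [hp_idem]; simp
    · simpa using IsSelfAdjoint.sub (IsSelfAdjoint.one (H →L[ℂ] H)) hp_sa
  -- τ 1 = 1 as an operator
  have htau1 : τ 1 = 1 := by
    ext ξ
    simpa using tau_one_apply τ l hKraus hUnital ξ
  -- monotone iterates
  have hmono : Monotone fun n => τ^[n] p := by
    apply monotone_nat_of_le_succ
    intro n
    rw [Function.iterate_succ_apply]
    exact tau_iter_mono τ l hKraus ((ContinuousLinearMap.le_def p (τ p)).mpr hp_sub) n
  have hle1 : ∀ n, τ^[n] p ≤ 1 := by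
    intro n
    have := tau_iter_mono τ l hKraus hp1 n
    rwa [Function.iterate_fixed htau1 n] at this
  have hy_le1 : y ≤ 1 := ge_of_tendsto_ge hle1 hy_lim
  have h_iter_le_y : ∀ n, τ^[n] p ≤ y := by
    intro n
    exact le_of_tendsto_le (fun m => hmono (Nat.le_add_left n m))
      (hy_lim.comp (tendsto_add_atTop_nat n))
  have hp_le_y : p ≤ y := by simpa using h_iter_le_y 0
  have hy_sa : IsSelfAdjoint y := by
    have h1 := ((ContinuousLinearMap.le_def y 1).mp hy_le1).isSelfAdjoint
    have := IsSelfAdjoint.sub (IsSelfAdjoint.one (H →L[ℂ] H)) h1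
    simpa using this
  have hsymy := isSelfAdjoint_iff_isSymmetric.mp hy_sa
  -- norm convergence
  have hnorm0 : Filter.Tendsto (fun n => ‖y - τ^[n] p‖) Filter.atTop (nhds 0) := by
    have := tendsto_iff_norm_sub_tendsto_zero.mp hy_lim
    simpa [norm_sub_rev] using this
  -- scalar fixed-point property of y
  have hfix : ∀ ξ : H, ⟪ξ, τ y ξ⟫_ℂ = ⟪ξ, y ξ⟫_ℂ := by
    intro ξ
    set c : ℕ → (H →L[ℂ] H) := fun n => y - τ^[n] p with hc
    have hcpos : ∀ n, (c n).IsPositive :=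
      fun n => (ContinuousLinearMap.le_def _ y).mp (h_iter_le_y n)
    have hτc_pos : ∀ n, (τ (c n)).IsPositive := fun n => tau_pos τ l hKraus (hcpos n)
    have hτc_le : ∀ n, τ (c n) ≤ (‖c n‖ : ℂ) • 1 := by
      intro n
      have h2 := tau_mono τ l hKraus (sa_le_norm_smul_one (hcpos n).isSelfAdjoint)
      have h3 : τ ((‖c n‖ : ℂ) • 1) = (‖c n‖ : ℂ) • 1 := by
        ext η
        rw [tau_smul_one_apply τ l hKraus hUnital]
        simp
      rwa [h3] at h2
    have hbound : ∀ n, ‖⟪ξ, τ (c n) ξ⟫_ℂ‖ ≤ ‖c n‖ * ‖ξ‖ ^ 2 := by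
      intro n
      have hreal := inner_self_real_of_sa (hτc_pos n).isSelfAdjoint ξ
      have hnn : 0 ≤ (⟪ξ, τ (c n) ξ⟫_ℂ).re := (hτc_pos n).re_inner_nonneg_right ξ
      have hub : (⟪ξ, τ (c n) ξ⟫_ℂ).re ≤ ‖c n‖ * ‖ξ‖ ^ 2 := by
        have h4 := ((ContinuousLinearMap.le_def _ _).mp (hτc_le n)).re_inner_nonneg_right ξ
        have h5 : ⟪ξ, ((‖c n‖ : ℂ) • (1 : H →L[ℂ] H) - τ (c n)) ξ⟫_ℂ
            = (‖c n‖ : ℂ) * ⟪ξ, ξ⟫_ℂ - ⟪ξ, τ (c n) ξ⟫_ℂ := by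
          rw [ContinuousLinearMap.sub_apply, inner_sub_right,
            ContinuousLinearMap.smul_apply, ContinuousLinearMap.one_apply,
            inner_smul_right]
        rw [h5] at h4
        have h6 : ⟪ξ, ξ⟫_ℂ = ((‖ξ‖ ^ 2 : ℝ) : ℂ) := by
          rw [inner_self_eq_norm_sq_to_K]
          norm_cast
        rw [h6] at h4
        simp only [map_sub] at h4
        have h7 : (((‖c n‖ : ℂ)) * ((‖ξ‖ ^ 2 : ℝ) : ℂ)).re = ‖c n‖ * ‖ξ‖ ^ 2 := by
          norm_cast
        rw [RCLike.re_to_complex, RCLike.re_to_complex] at h4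
        rw [h7] at h4
        linarith
      rw [hreal]
      rw [Complex.norm_real, Real.norm_eq_abs, abs_of_nonneg hnn]
      exact hub
    have hA : Filter.Tendsto (fun n => ⟪ξ, τ^[n+1] p ξ⟫_ℂ) Filter.atTop
        (nhds ⟪ξ, y ξ⟫_ℂ) := by
      have happ : Filter.Tendsto (fun n => (τ^[n+1] p) ξ) Filter.atTop (nhds (y ξ)) :=
        ((ContinuousLinearMap.apply ℂ H ξ).continuous.tendsto y).comp
          (hy_lim.comp (tendsto_add_atTop_nat 1))
      exact Filter.Tendsto.inner tendsto_const_nhds happ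
    have hB : Filter.Tendsto (fun n => ⟪ξ, τ (c n) ξ⟫_ℂ) Filter.atTop (nhds 0) := by
      apply squeeze_zero_norm hbound
      simpa using hnorm0.mul_const (‖ξ‖ ^ 2)
    have h5 : (fun _ : ℕ => ⟪ξ, τ y ξ⟫_ℂ)
        = fun n => ⟪ξ, τ^[n+1] p ξ⟫_ℂ + ⟪ξ, τ (c n) ξ⟫_ℂ := by
      funext n
      have h6 : τ (c n) ξ = τ y ξ - τ^[n+1] p ξ := by
        rw [Function.iterate_succ_apply']
        exact tau_sub_apply τ l hKraus y (τ^[n] p) ξ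
      rw [h6, inner_sub_right]
      ring
    have h7 : Filter.Tendsto (fun _ : ℕ => ⟪ξ, τ y ξ⟫_ℂ) Filter.atTop
        (nhds (⟪ξ, y ξ⟫_ℂ + 0)) := by
      rw [h5]
      exact hA.add hB
    have := tendsto_nhds_unique tendsto_const_nhds h7
    rw [this, add_zero]
  -- y acts as the identity on the range of p
  have hrange : ∀ ξ : H, y (p ξ) = p ξ := by
    intro ξ
    have hBpos : (1 - y).IsPositive := (ContinuousLinearMap.le_def y 1).mp hy_le1
    have hppξ : p (p ξ) = p ξ := by
      rw [← ContinuousLinearMap.mul_apply, hp_idem]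
    have hzero : ⟪p ξ, (1 - y) (p ξ)⟫_ℂ = 0 := by
      have hreal := inner_self_real_of_sa hBpos.isSelfAdjoint (p ξ)
      have hge : 0 ≤ (⟪p ξ, (1 - y) (p ξ)⟫_ℂ).re := hBpos.re_inner_nonneg_right (p ξ)
      have hle : (⟪p ξ, (1 - y) (p ξ)⟫_ℂ).re ≤ 0 := by
        have h4 := ((ContinuousLinearMap.le_def p y).mp hp_le_y).re_inner_nonneg_right (p ξ)
        have h5 : ⟪p ξ, (y - p) (p ξ)⟫_ℂ = ⟪p ξ, y (p ξ)⟫_ℂ - ⟪p ξ, p ξ⟫_ℂ := by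
          simp [inner_sub_right, hppξ]
        have h6 : ⟪p ξ, (1 - y) (p ξ)⟫_ℂ = ⟪p ξ, p ξ⟫_ℂ - ⟪p ξ, y (p ξ)⟫_ℂ := by
          simp [inner_sub_right]
        rw [h5] at h4
        rw [h6, Complex.sub_re]
        rw [map_sub, RCLike.re_to_complex, RCLike.re_to_complex] at h4
        linarith
      have : (⟪p ξ, (1 - y) (p ξ)⟫_ℂ).re = 0 := le_antisymm hle hge
      rw [hreal, this, Complex.ofReal_zero]
    have := apply_eq_zero_of_isPositive hBpos hzero
    have h9 : p ξ - y (p ξ) = 0 := by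
      simpa [ContinuousLinearMap.sub_apply] using this
    exact (sub_eq_zero.mp h9).symm
  -- minimizer of the quadratic form of y on the unit sphere
  have hcont : ContinuousOn (fun ξ : H => (⟪ξ, y ξ⟫_ℂ).re) (Metric.sphere (0:H) 1) := by
    apply Continuous.continuousOn
    exact Complex.continuous_re.comp (Continuous.inner continuous_id y.continuous)
  obtain ⟨ξ₀, hξ₀S, hminOn⟩ := (isCompact_sphere (0:H) 1).exists_isMinOn
    (NormedSpace.sphere_nonempty.mpr zero_le_one) hcont
  have hmin : ∀ u ∈ Metric.sphere (0:H) 1, (⟪ξ₀, y ξ₀⟫_ℂ).re ≤ (⟪u, y u⟫_ℂ).re :=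
    fun u hu => isMinOn_iff.mp hminOn u hu
  have hξ₀ : ‖ξ₀‖ = 1 := mem_sphere_zero_iff_norm.mp hξ₀S
  set ε : ℝ := (⟪ξ₀, y ξ₀⟫_ℂ).re with hε
  set A : H →L[ℂ] H := y - (ε : ℂ) • 1 with hA
  have hAsa : IsSelfAdjoint A := by
    apply IsSelfAdjoint.sub hy_sa
    rw [IsSelfAdjoint, star_smul, star_one, Complex.star_def, Complex.conj_ofReal]
  have hAform : ∀ ξ : H, ⟪ξ, A ξ⟫_ℂ = ⟪ξ, y ξ⟫_ℂ - (ε : ℂ) * ⟪ξ, ξ⟫_ℂ := by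
    intro ξ
    rw [hA, ContinuousLinearMap.sub_apply, inner_sub_right,
      ContinuousLinearMap.smul_apply, ContinuousLinearMap.one_apply, inner_smul_right]
  have hApos : A.IsPositive := by
    refine ⟨isSelfAdjoint_iff_isSymmetric.mp hAsa, fun ξ => ?_⟩
    rw [reApplyInnerSelf, inner_re_symm]
    rw [show RCLike.re ⟪ξ, A ξ⟫_ℂ = (⟪ξ, A ξ⟫_ℂ).re from rfl, hAform, Complex.sub_re]
    rcases eq_or_ne ξ 0 with h0 | h0
    · simp [h0]
    · have hn : 0 < ‖ξ‖ := norm_pos_iff.mpr h0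
      set u : H := (‖ξ‖⁻¹ : ℂ) • ξ with hu
      have hun : u ∈ Metric.sphere (0:H) 1 := by
        rw [mem_sphere_zero_iff_norm, hu, norm_smul]
        simp [norm_inv, hn.ne']
      have h2 := hmin u hun
      have h3 : ⟪u, y u⟫_ℂ = ((‖ξ‖⁻¹ : ℝ) : ℂ) ^ 2 * ⟪ξ, y ξ⟫_ℂ := by
        have hys : y ((‖ξ‖⁻¹ : ℂ) • ξ) = (‖ξ‖⁻¹ : ℂ) • y ξ := map_smul y _ _
        rw [hu, hys, inner_smul_left, inner_smul_right]
        simp only [Complex.ofReal_inv, map_inv₀, Complex.conj_ofReal]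
        ring
      have h4 : (⟪u, y u⟫_ℂ).re = (‖ξ‖⁻¹) ^ 2 * (⟪ξ, y ξ⟫_ℂ).re := by
        rw [h3, ← Complex.ofReal_pow, Complex.re_ofReal_mul]
      rw [h4] at h2
      have h5 : ((‖ξ‖:ℂ) * (‖ξ‖:ℂ)).re = ‖ξ‖ * ‖ξ‖ := by norm_cast
      have h6 : (((ε:ℂ)) * ⟪ξ, ξ⟫_ℂ).re = ε * (‖ξ‖ ^ 2) := by
        have h7 : ⟪ξ, ξ⟫_ℂ = ((‖ξ‖ ^ 2 : ℝ) : ℂ) := by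
          rw [inner_self_eq_norm_sq_to_K]; norm_cast
        rw [h7, ← Complex.ofReal_mul]
        norm_cast
      rw [h6]
      have h8 : ε * ‖ξ‖ ^ 2 ≤ (⟪ξ, y ξ⟫_ℂ).re := by
        have h9 := mul_le_mul_of_nonneg_left h2 (le_of_lt (pow_pos hn 2))
        calc ε * ‖ξ‖ ^ 2 = ‖ξ‖ ^ 2 * ε := by ring
        _ ≤ ‖ξ‖ ^ 2 * ((‖ξ‖⁻¹) ^ 2 * (⟪ξ, y ξ⟫_ℂ).re) := h9
        _ = (⟪ξ, y ξ⟫_ℂ).re := by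
            field_simp
      linarith
  -- ξ₀ is an eigenvector of y with eigenvalue ε
  have hinner_ξ₀ : ⟪ξ₀, ξ₀⟫_ℂ = 1 := by
    rw [inner_self_eq_norm_sq_to_K, hξ₀]
    norm_num
  have hyξ₀ : ⟪ξ₀, y ξ₀⟫_ℂ = (ε : ℂ) := by
    rw [inner_self_real_of_sa hy_sa ξ₀, ← hε]
  have hEig0 : y ξ₀ = (ε : ℂ) • ξ₀ := by
    have hz : ⟪ξ₀, A ξ₀⟫_ℂ = 0 := by
      rw [hAform, hyξ₀, hinner_ξ₀, mul_one, sub_self]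
    have := apply_eq_zero_of_isPositive hApos hz
    rw [hA, ContinuousLinearMap.sub_apply, ContinuousLinearMap.smul_apply,
      ContinuousLinearMap.one_apply, sub_eq_zero] at this
    exact this
  by_cases hε1 : ε = 1
  · refine le_antisymm hy_le1 ?_
    rw [ContinuousLinearMap.le_def]
    rw [hA, hε1] at hApos
    simpa using hApos
  · exfalso
    have hε1' : (ε : ℂ) ≠ 1 := by
      exact_mod_cast fun h => hε1 (by exact_mod_cast h)
    -- invariance of the eigenspace under every Kraus operator
    have hInv : ∀ ξ : H, y ξ = (ε : ℂ) • ξ → ∀ k, y ((l k) ξ) = (ε : ℂ) • ((l k) ξ) := by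
      intro ξ hξeig
      have h1 := kraus_inner τ l hKraus y ξ ξ
      have h2 := (unital_inner l hUnital ξ ξ).mul_left (ε : ℂ)
      have h3 := h1.sub h2
      have htot : ⟪ξ, τ y ξ⟫_ℂ - (ε : ℂ) * ⟪ξ, ξ⟫_ℂ = 0 := by
        rw [hfix ξ, hξeig, inner_smul_right, sub_self]
      rw [htot] at h3
      have h4 : (fun k => ⟪(l k) ξ, y ((l k) ξ)⟫_ℂ - (ε:ℂ) * ⟪(l k) ξ, (l k) ξ⟫_ℂ)
          = fun k => ⟪(l k) ξ, A ((l k) ξ)⟫_ℂ := by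
        funext k
        rw [hAform]
      rw [h4] at h3
      have h5 := h3.mapL Complex.reCLM
      have h6 : ∀ k, 0 ≤ (⟪(l k) ξ, A ((l k) ξ)⟫_ℂ).re := fun k =>
        hApos.re_inner_nonneg_right ((l k) ξ)
      have h7 : ∀ k, (⟪(l k) ξ, A ((l k) ξ)⟫_ℂ).re = 0 := by
        have := (hasSum_zero_iff_of_nonneg h6).mp (by simpa using h5)
        intro k
        exact congrFun this k
      intro k
      have h8 : ⟪(l k) ξ, A ((l k) ξ)⟫_ℂ = 0 := by
        rw [inner_self_real_of_sa hAsa ((l k) ξ), h7 k, Complex.ofReal_zero]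
      have := apply_eq_zero_of_isPositive hApos h8
      rw [hA, ContinuousLinearMap.sub_apply, ContinuousLinearMap.smul_apply,
        ContinuousLinearMap.one_apply, sub_eq_zero] at this
      exact this
    -- vanishing of the quadratic form of the iterates on the eigenspace
    have hVan : ∀ n : ℕ, ∀ ξ : H, y ξ = (ε : ℂ) • ξ → ⟪ξ, τ^[n] p ξ⟫_ℂ = 0 := by
      intro n
      induction n with
      | zero =>
          intro ξ hξeig
          simp only [Function.iterate_zero, id_eq]
          -- first show ⟪p ξ, ξ⟫ = 0
          have hppξ : p (p ξ) = p ξ := by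
            rw [← ContinuousLinearMap.mul_apply, hp_idem]
          have e1 : ⟪p ξ, y ξ⟫_ℂ = (ε : ℂ) * ⟪p ξ, ξ⟫_ℂ := by
            rw [hξeig, inner_smul_right]
          have e2 : ⟪y (p ξ), ξ⟫_ℂ = ⟪p ξ, y ξ⟫_ℂ := hsymy (p ξ) ξ
          rw [hrange ξ] at e2
          have e3 : ((ε : ℂ) - 1) * ⟪p ξ, ξ⟫_ℂ = 0 := by
            rw [sub_mul, one_mul, ← e1, e2, sub_self]
          have e4 : ⟪p ξ, ξ⟫_ℂ = 0 := by
            rcases mul_eq_zero.mp e3 with h | h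
            · exact absurd (sub_eq_zero.mp h) hε1'
            · exact h
          have e5 : ⟪p ξ, p ξ⟫_ℂ = 0 := by
            have h10 : ⟪p (p ξ), ξ⟫_ℂ = ⟪p ξ, p ξ⟫_ℂ := hsymp (p ξ) ξ
            rw [hppξ, e4] at h10
            exact h10.symm
          have e6 : p ξ = 0 := inner_self_eq_zero.mp e5
          rw [e6, inner_zero_right]
      | succ n ih =>
          intro ξ hξeig
          rw [Function.iterate_succ_apply']
          have h1 := kraus_inner τ l hKraus (τ^[n] p) ξ ξ
          have h2 : (fun k => ⟪(l k) ξ, (τ^[n] p) ((l k) ξ)⟫_ℂ) = fun _ => (0:ℂ) := by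
            funext k
            exact ih ((l k) ξ) (hInv ξ hξeig k)
          rw [h2] at h1
          exact h1.unique hasSum_zero
    -- conclusion
    have hlim0 : Filter.Tendsto (fun n => ⟪ξ₀, τ^[n] p ξ₀⟫_ℂ) Filter.atTop
        (nhds ⟪ξ₀, y ξ₀⟫_ℂ) := by
      have happ : Filter.Tendsto (fun n => (τ^[n] p) ξ₀) Filter.atTop (nhds (y ξ₀)) :=
        ((ContinuousLinearMap.apply ℂ H ξ₀).continuous.tendsto y).comp hy_lim
      exact Filter.Tendsto.inner tendsto_const_nhds happ
    have hzero : ⟪ξ₀, y ξ₀⟫_ℂ = 0 := by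
      have h1 : (fun n => ⟪ξ₀, τ^[n] p ξ₀⟫_ℂ) = fun _ => (0:ℂ) := by
        funext n
        exact hVan n ξ₀ hEig0
      rw [h1] at hlim0
      exact (tendsto_nhds_unique tendsto_const_nhds hlim0).symm
    rw [hyξ₀] at hzero
    have hεzero : ε = 0 := by exact_mod_cast hzero
    have hyξ₀0 : y ξ₀ = 0 := by
      rw [hEig0, hεzero]
      simp
    have : ξ₀ = 0 := by
      apply hy_inj
      rw [hyξ₀0, map_zero]
    rw [this, norm_zero] at hξ₀
    exact one_ne_zero hξ₀.symm
end

section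
/- Suppose H is finite dimensional. Then there exists a finite family (p_i)_{1≤i≤m} of mutually orthogonal projections, each of which is a minimal sub-harmonic projection for τ, such that the limit y = lim_{n→∞} τ^n(p_1 + ⋯ + p_m) is injective (i.e. 1 − ∑_i p_i is metastable). -/
/- auxiliary development -/
open ContinuousLinearMap Filter RCLike Topology
set_option linter.unusedSectionVars false
set_option maxHeartbeats 1000000
set_option synthInstance.maxHeartbeats 1000000

namespace SHP

variable {H : Type*} [NormedAddCommGroup H] [InnerProductSpace ℂ H] [FiniteDimensional ℂ H]

local notation "⟪" x ", " y "⟫" => @inner ℂ _ _ x y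

lemma sa_move {S : H →L[ℂ] H} (hS : IsSelfAdjoint S) (v w : H) :
    ⟪S v, w⟫ = ⟪v, S w⟫ := by
  conv_lhs => rw [← hS.adjoint_eq]
  exact ContinuousLinearMap.adjoint_inner_left S w v

lemma pos_decomp {T : H →L[ℂ] H} (hT : T.IsPositive) :
    ∃ S : H →L[ℂ] H, IsSelfAdjoint S ∧ T = S * S := by
  obtain ⟨S, hS, -, hsq⟩ : ∃ S : H →L[ℂ] H, IsSelfAdjoint S ∧ True ∧ S ^ 2 = T :=
    ⟨CFC.sqrt T, (CFC.sqrt_nonneg T).isSelfAdjoint, trivial, by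
      rw [sq]; exact CFC.sqrt_mul_sqrt_self T ((ContinuousLinearMap.nonneg_iff_isPositive T).2 hT)⟩
  exact ⟨S, hS, by rw [← hsq, sq]⟩

lemma pos_re_inner_nonneg {T : H →L[ℂ] H} (hT : T.IsPositive) (ξ : H) :
    0 ≤ re ⟪ξ, T ξ⟫ := hT.re_inner_nonneg_right ξ

lemma pos_inner_real {T : H →L[ℂ] H} (hT : IsSelfAdjoint T) (ξ : H) :
    ⟪ξ, T ξ⟫ = (re ⟪ξ, T ξ⟫ : ℂ) := by
  have h : (starRingEnd ℂ) ⟪ξ, T ξ⟫ = ⟪ξ, T ξ⟫ := by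
    rw [inner_conj_symm]; exact sa_move hT ξ ξ
  exact ((RCLike.conj_eq_iff_re).1 h).symm

lemma pos_inner_zero {T : H →L[ℂ] H} (hT : T.IsPositive) {ξ : H}
    (h : re ⟪ξ, T ξ⟫ = 0) : T ξ = 0 := by
  obtain ⟨S, hS, rfl⟩ := pos_decomp hT
  have h1 : ⟪ξ, (S * S) ξ⟫ = ⟪S ξ, S ξ⟫ := by
    rw [ContinuousLinearMap.mul_apply, ← sa_move hS]
  have h2 : ‖S ξ‖ ^ 2 = 0 := by
    rw [← inner_self_eq_norm_sq (𝕜 := ℂ)]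
    rw [← h1]; exact h ▸ rfl
  have h3 : S ξ = 0 := by
    have := pow_eq_zero_iff (n := 2) (by norm_num) |>.1 h2
    exact norm_eq_zero.1 this
  rw [ContinuousLinearMap.mul_apply, h3, map_zero]

lemma pos_le_of_norm {T : H →L[ℂ] H} (hT : T.IsPositive) (h1 : (1 - T).IsPositive) (ξ : H) :
    ‖T ξ‖ ≤ ‖ξ‖ := by
  obtain ⟨S, hS, hTS⟩ := pos_decomp hT
  have hT2 : ∀ v, T v = S (S v) := fun v => by rw [hTS]; rfl
  have e1 : ∀ w, ⟪T ξ, w⟫ = ⟪S ξ, S w⟫ := fun w => by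
    rw [hT2 ξ]; exact sa_move hS (S ξ) w
  have e5 : ∀ w, ⟪w, T w⟫ = ⟪S w, S w⟫ := fun w => by
    rw [hT2 w]; exact (sa_move hS w (S w)).symm
  by_cases h0 : T ξ = 0
  · rw [h0]; simp
  have c1 : ‖T ξ‖ ^ 2 ≤ ‖S ξ‖ * ‖S (T ξ)‖ := by
    calc ‖T ξ‖ ^ 2 = re ⟪T ξ, T ξ⟫ := by
          rw [← inner_self_eq_norm_sq (𝕜 := ℂ)]
      _ ≤ ‖⟪S ξ, S (T ξ)⟫‖ := by rw [e1 (T ξ)]; exact RCLike.re_le_norm _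
      _ ≤ ‖S ξ‖ * ‖S (T ξ)‖ := norm_inner_le_norm _ _
  have c2 : ‖S ξ‖ ^ 2 ≤ ‖ξ‖ * ‖T ξ‖ := by
    have h5 : ‖S ξ‖ ^ 2 = re ⟪ξ, T ξ⟫ := by
      rw [e5 ξ, ← inner_self_eq_norm_sq (𝕜 := ℂ)]
    rw [h5]
    calc re ⟪ξ, T ξ⟫ ≤ ‖(⟪ξ, T ξ⟫ : ℂ)‖ := RCLike.re_le_norm _
      _ ≤ ‖ξ‖ * ‖T ξ‖ := norm_inner_le_norm _ _
  have c3 : ‖S (T ξ)‖ ^ 2 ≤ ‖T ξ‖ ^ 2 := by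
    have e2 : ‖S (T ξ)‖ ^ 2 = re ⟪T ξ, T (T ξ)⟫ := by
      rw [e5 (T ξ), ← inner_self_eq_norm_sq (𝕜 := ℂ)]
    have e3 : re ⟪T ξ, T (T ξ)⟫ ≤ re ⟪T ξ, T ξ⟫ := by
      have hh := pos_re_inner_nonneg h1 (T ξ)
      simp only [ContinuousLinearMap.sub_apply, ContinuousLinearMap.one_apply,
        inner_sub_right, map_sub] at hh
      linarith
    have e4 : re ⟪T ξ, T ξ⟫ = ‖T ξ‖ ^ 2 := by
      rw [← inner_self_eq_norm_sq (𝕜 := ℂ)]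
    rw [e2]; rw [e4] at e3; exact e3
  set t := ‖T ξ‖ with ht
  set s := ‖ξ‖ with hs
  set a := ‖S ξ‖ with ha
  set b := ‖S (T ξ)‖ with hb
  have hta : (0:ℝ) ≤ t := norm_nonneg _
  have hsa : (0:ℝ) ≤ s := norm_nonneg _
  have haa : (0:ℝ) ≤ a := norm_nonneg _
  have hba : (0:ℝ) ≤ b := norm_nonneg _
  have key : t^4 ≤ s * t^3 := by nlinarith [c1, c2, c3, mul_nonneg haa hba]
  have hpos : 0 < t := norm_pos_iff.2 h0
  nlinarith [key, pow_pos hpos 3]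


section Proj

lemma inner_proj_self {p : H →L[ℂ] H} (hp : p * p = p) (hsa : IsSelfAdjoint p) (v : H) :
    re ⟪v, p v⟫ = ‖p v‖ ^ 2 := by
  have h1 : p (p v) = p v := by rw [← ContinuousLinearMap.mul_apply, hp]
  have h2 : ⟪v, p v⟫ = ⟪p v, p v⟫ := by
    conv_lhs => rw [← h1]
    exact (sa_move hsa v (p v)).symm ▸ rfl
  rw [h2, inner_self_eq_norm_sq (𝕜 := ℂ)]

lemma inner_proj_self' {p : H →L[ℂ] H} (hp : p * p = p) (hsa : IsSelfAdjoint p) (v : H) :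
    ⟪v, p v⟫ = ((‖p v‖ ^ 2 : ℝ) : ℂ) := by
  rw [← inner_proj_self hp hsa v]
  exact pos_inner_real hsa v

lemma norm_proj_le {p : H →L[ℂ] H} (hp : p * p = p) (hsa : IsSelfAdjoint p) (v : H) :
    ‖p v‖ ≤ ‖v‖ := by
  by_cases h0 : p v = 0
  · rw [h0]; simp
  have h1 : ‖p v‖ ^ 2 ≤ ‖v‖ * ‖p v‖ := by
    rw [← inner_proj_self hp hsa v]
    exact (RCLike.re_le_norm _).trans (norm_inner_le_norm _ _)
  have h2 : 0 < ‖p v‖ := norm_pos_iff.2 h0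
  nlinarith

lemma proj_fix_of_norm_eq {p : H →L[ℂ] H} (hp : p * p = p) (hsa : IsSelfAdjoint p) {v : H}
    (h : ‖v‖ ≤ ‖p v‖) : p v = v := by
  have h2 : ‖p v‖ ≤ ‖v‖ := norm_proj_le hp hsa v
  have h3 : ‖p v‖ = ‖v‖ := le_antisymm h2 h
  have h4 : ‖v - p v‖ ^ 2 = ‖v‖ ^ 2 - 2 * re ⟪v, p v⟫ + ‖p v‖ ^ 2 :=
    norm_sub_sq (𝕜 := ℂ) v (p v)
  rw [inner_proj_self hp hsa v, h3] at h4
  have h5 : ‖v - p v‖ ^ 2 = 0 := by rw [h4]; ring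
  have h6 : v - p v = 0 := by
    have := pow_eq_zero_iff (n := 2) (by norm_num) |>.1 h5
    exact norm_eq_zero.1 this
  rw [sub_eq_zero] at h6; exact h6.symm

def fixSpace (p : H →L[ℂ] H) : Submodule ℂ H where
  carrier := {v | p v = v}
  add_mem' := by intro a b ha hb; simp only [Set.mem_setOf_eq, map_add] at *; rw [ha, hb]
  zero_mem' := by simp
  smul_mem' := by intro c a ha; simp only [Set.mem_setOf_eq, map_smul] at *; rw [ha]

lemma mem_fixSpace {p : H →L[ℂ] H} {v : H} : v ∈ fixSpace p ↔ p v = v := Iff.rfl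

lemma proj_eq_of_fixSpace_eq {p q : H →L[ℂ] H} (hp : p * p = p) (hsa : IsSelfAdjoint p)
    (hq : q * q = q) (hqsa : IsSelfAdjoint q) (h : fixSpace p = fixSpace q) : p = q := by
  ext ξ
  have hpm : p ξ ∈ fixSpace p := by
    rw [mem_fixSpace, ← ContinuousLinearMap.mul_apply, hp]
  have hq_pξ : q (p ξ) = p ξ := (mem_fixSpace).1 (h ▸ hpm)
  have hw : q (ξ - p ξ) = 0 := by
    set w := q (ξ - p ξ) with hwdef
    have hwfix : q w = w := by
      rw [hwdef, ← ContinuousLinearMap.mul_apply, hq]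
    have hwp : p w = w := (mem_fixSpace).1 (h.symm ▸ (mem_fixSpace.2 hwfix))
    have hz : ⟪w, w⟫ = 0 := by
      calc ⟪w, w⟫ = ⟪q (ξ - p ξ), w⟫ := rfl
        _ = ⟪ξ - p ξ, q w⟫ := sa_move hqsa _ _
        _ = ⟪ξ - p ξ, w⟫ := by rw [hwfix]
        _ = ⟪ξ - p ξ, p w⟫ := by rw [hwp]
        _ = ⟪p (ξ - p ξ), w⟫ := (sa_move hsa _ _).symm
        _ = 0 := by
            have : p (ξ - p ξ) = 0 := by
              rw [map_sub, ← ContinuousLinearMap.mul_apply, hp, sub_self]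
            rw [this, inner_zero_left]
    exact inner_self_eq_zero.1 hz
  have : q ξ = q (p ξ) + q (ξ - p ξ) := by rw [← map_add]; congr 1; abel
  rw [this, hq_pξ, hw, add_zero]

noncomputable def P (V : Submodule ℂ H) : H →L[ℂ] H :=
  V.subtypeL ∘L V.orthogonalProjectionOnto

lemma P_sa (V : Submodule ℂ H) : IsSelfAdjoint (P V) :=
  isSelfAdjoint_starProjection V

lemma P_mem (V : Submodule ℂ H) (ξ : H) : P V ξ ∈ V := (V.orthogonalProjectionOnto ξ).2

lemma P_eq_self {V : Submodule ℂ H} {ξ : H} (h : ξ ∈ V) : P V ξ = ξ :=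
  Submodule.starProjection_eq_self_iff.2 h

lemma P_idem (V : Submodule ℂ H) : P V * P V = P V := by
  ext ξ
  exact P_eq_self (P_mem V ξ)

lemma fixSpace_P (V : Submodule ℂ H) : fixSpace (P V) = V := by
  apply le_antisymm
  · intro v hv
    rw [mem_fixSpace] at hv
    rw [← hv]; exact P_mem V v
  · intro v hv; exact mem_fixSpace.2 (P_eq_self hv)

lemma P_eq_zero_of_orth {V : Submodule ℂ H} {w : H} (h : ∀ u ∈ V, ⟪u, w⟫ = 0) :
    P V w = 0 := by
  have h1 : re ⟪w, P V w⟫ = ‖P V w‖ ^ 2 := inner_proj_self (P_idem V) (P_sa V) w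
  have h2 : ⟪w, P V w⟫ = 0 := by
    rw [← inner_conj_symm]
    rw [h (P V w) (P_mem V w)]
    simp
  rw [h2] at h1
  simp only [map_zero] at h1
  have := pow_eq_zero_iff (n := 2) (by norm_num) |>.1 h1.symm
  exact norm_eq_zero.1 this

lemma P_ne_zero {V : Submodule ℂ H} (h : V ≠ ⊥) : P V ≠ 0 := by
  obtain ⟨v, hv, hv0⟩ := Submodule.exists_mem_ne_zero_of_ne_bot h
  intro hPz
  have := P_eq_self hv
  rw [hPz] at this
  exact hv0 (by simpa using this.symm)

lemma P_pos (V : Submodule ℂ H) : (P V).IsPositive := by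
  refine ⟨ContinuousLinearMap.isSelfAdjoint_iff_isSymmetric.1 (P_sa V), fun ξ => ?_⟩
  have : re ⟪ξ, P V ξ⟫ = ‖P V ξ‖ ^ 2 := inner_proj_self (P_idem V) (P_sa V) ξ
  rw [reApplyInnerSelf, inner_re_symm, this]
  positivity

lemma fix_le {p q : H →L[ℂ] H} (hp : p * p = p) (hpsa : IsSelfAdjoint p)
    (hq : q * q = q) (hqsa : IsSelfAdjoint q) (hle : (p - q).IsPositive)
    {v : H} (hv : q v = v) : p v = v := by
  have h0 := hle.2 v
  rw [reApplyInnerSelf, inner_re_symm] at h0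
  simp only [ContinuousLinearMap.sub_apply, inner_sub_right, map_sub] at h0
  have h1 : re ⟪v, q v⟫ = ‖v‖ ^ 2 := by
    rw [hv]; exact inner_self_eq_norm_sq (𝕜 := ℂ) v
  have h2 : re ⟪v, p v⟫ = ‖p v‖ ^ 2 := inner_proj_self hp hpsa v
  apply proj_fix_of_norm_eq hp hpsa
  nlinarith [norm_nonneg (p v), norm_nonneg v]


end Proj

variable {τ : (H →L[ℂ] H) → (H →L[ℂ] H)} {l : ℕ → H →L[ℂ] H}

section Kraus

variable (hKraus : ∀ (x : H →L[ℂ] H) (ξ : H),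
    HasSum (fun k => star (l k) (x ((l k) ξ))) (τ x ξ))
variable (hUnital : ∀ ξ : H, HasSum (fun k => star (l k) ((l k) ξ)) ξ)

include hKraus hUnital
set_option linter.unusedSectionVars false
set_option maxHeartbeats 1000000
set_option synthInstance.maxHeartbeats 1000000

lemma kraus_inner (x : H →L[ℂ] H) (ξ η : H) :
    HasSum (fun k => ⟪l k η, x (l k ξ)⟫) ⟪η, τ x ξ⟫ := by
  have h := (hKraus x ξ).mapL (innerSL ℂ η)
  convert h using 2 with k
  · rfl
  all_goals simp only [innerSL_apply_apply, star_eq_adjoint, adjoint_inner_right]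

lemma unital_inner (ξ η : H) :
    HasSum (fun k => ⟪l k η, l k ξ⟫) ⟪η, ξ⟫ := by
  have h := (hUnital ξ).mapL (innerSL ℂ η)
  convert h using 2 with k
  · rfl
  all_goals simp only [innerSL_apply_apply, star_eq_adjoint, adjoint_inner_right]

lemma kraus_inner_re (x : H →L[ℂ] H) (ξ : H) :
    HasSum (fun k => re ⟪l k ξ, x (l k ξ)⟫) (re ⟪ξ, τ x ξ⟫) :=
  (kraus_inner hKraus hUnital x ξ ξ).mapL Complex.reCLM

lemma unital_inner_re (ξ η : H) :
    HasSum (fun k => re ⟪l k η, l k ξ⟫) (re ⟪η, ξ⟫) :=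
  (unital_inner hKraus hUnital ξ η).mapL Complex.reCLM

lemma tau_sub (x y : H →L[ℂ] H) : τ (x - y) = τ x - τ y := by
  ext ξ
  have h1 := hKraus (x - y) ξ
  have h2 := (hKraus x ξ).sub (hKraus y ξ)
  have he : (fun k => star (l k) ((x - y) (l k ξ)))
      = fun k => star (l k) (x (l k ξ)) - star (l k) (y (l k ξ)) := by
    funext k; simp [map_sub]
  rw [he] at h1
  exact h1.unique h2

lemma tau_one : τ 1 = 1 := by
  ext ξ
  have h1 := hKraus 1 ξ
  simp only [ContinuousLinearMap.one_apply] at h1 ⊢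
  exact h1.unique (hUnital ξ)

lemma tau_pos {x : H →L[ℂ] H} (hx : x.IsPositive) : (τ x).IsPositive := by
  rw [isPositive_iff_complex]
  intro ξ
  have hsum := kraus_inner hKraus hUnital x ξ ξ
  have hterm : ∀ k, (⟪l k ξ, x (l k ξ)⟫ : ℂ) = (re ⟪l k ξ, x (l k ξ)⟫ : ℝ) := by
    intro k; exact pos_inner_real hx.isSelfAdjoint (l k ξ)
  have hre := (kraus_inner_re hKraus hUnital x ξ)
  have him : HasSum (fun k => Complex.im ⟪l k ξ, x (l k ξ)⟫) (Complex.im ⟪ξ, τ x ξ⟫) :=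
    hsum.mapL Complex.imCLM
  have him0 : ∀ k, Complex.im ⟪l k ξ, x (l k ξ)⟫ = 0 := by
    intro k; rw [hterm k]; simp
  have himz : Complex.im ⟪ξ, τ x ξ⟫ = 0 := by
    have : HasSum (fun _ : ℕ => (0:ℝ)) (Complex.im ⟪ξ, τ x ξ⟫) := by
      simpa [him0] using him
    simpa using this.unique hasSum_zero
  have hrepos : 0 ≤ re ⟪ξ, τ x ξ⟫ := by
    refine hasSum_le (fun k => ?_) hasSum_zero hre
    exact pos_re_inner_nonneg hx (l k ξ)
  constructor
  · have h1 : ⟪τ x ξ, ξ⟫ = (starRingEnd ℂ) ⟪ξ, τ x ξ⟫ := (inner_conj_symm _ _).symm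
    have h2 : (⟪ξ, τ x ξ⟫ : ℂ) = (re ⟪ξ, τ x ξ⟫ : ℝ) := by
      apply Complex.ext <;> simp [himz]
    rw [h1, h2]
    simp
  · have h1 : re ⟪τ x ξ, ξ⟫ = re ⟪ξ, τ x ξ⟫ := inner_re_symm _ _
    rw [h1]; exact hrepos

lemma fix_invariant {p : H →L[ℂ] H} (hp : p * p = p) (hsa : IsSelfAdjoint p)
    (hpos : (τ p - p).IsPositive) (k : ℕ) {v : H} (hv : p v = v) :
    p (l k v) = l k v := by
  have hF := kraus_inner_re hKraus hUnital p v
  have hG := unital_inner_re hKraus hUnital v v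
  have hterm_le : ∀ j, re ⟪l j v, p (l j v)⟫ ≤ re ⟪l j v, l j v⟫ := by
    intro j
    rw [inner_proj_self hp hsa, inner_self_eq_norm_sq (𝕜 := ℂ)]
    have := norm_proj_le hp hsa (l j v)
    nlinarith [norm_nonneg (p (l j v)), norm_nonneg (l j v)]
  have hle : re ⟪v, τ p v⟫ ≤ re ⟪v, v⟫ := hasSum_le hterm_le hF hG
  have hge : re ⟪v, v⟫ ≤ re ⟪v, τ p v⟫ := by
    have h0 := hpos.2 v
    rw [reApplyInnerSelf, inner_re_symm] at h0
    simp only [ContinuousLinearMap.sub_apply, inner_sub_right, map_sub] at h0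
    have h1 : re ⟪v, p v⟫ = re ⟪v, v⟫ := by rw [hv]
    linarith
  have heq : re ⟪v, τ p v⟫ = re ⟪v, v⟫ := le_antisymm hle hge
  have hD : HasSum (fun j => re ⟪l j v, l j v⟫ - re ⟪l j v, p (l j v)⟫) 0 := by
    have := hG.sub hF
    rw [heq, sub_self] at this
    exact this
  have hz : re ⟪l k v, l k v⟫ - re ⟪l k v, p (l k v)⟫ = 0 := by
    have hub := le_hasSum hD k (fun j _ => by linarith [hterm_le j])
    have hlb : 0 ≤ re ⟪l k v, l k v⟫ - re ⟪l k v, p (l k v)⟫ := by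
      linarith [hterm_le k]
    linarith
  apply proj_fix_of_norm_eq hp hsa
  have h1 : re ⟪l k v, p (l k v)⟫ = ‖p (l k v)‖ ^ 2 := inner_proj_self hp hsa _
  have h2 : re ⟪l k v, l k v⟫ = ‖l k v‖ ^ 2 := inner_self_eq_norm_sq (𝕜 := ℂ) _
  nlinarith [norm_nonneg (p (l k v)), norm_nonneg (l k v), hz]

lemma subharmonic_P {V : Submodule ℂ H} (hInv : ∀ k, ∀ v ∈ V, l k v ∈ V) :
    (τ (P V) - P V).IsPositive := by
  have hPsa := P_sa V
  have hPidem := P_idem V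
  refine ⟨((tau_pos hKraus hUnital (P_pos V)).1).sub (ContinuousLinearMap.isSelfAdjoint_iff_isSymmetric.1 hPsa), fun ξ => ?_⟩
  set η := P V ξ with hη
  set ζ := ξ - P V ξ with hζ
  have hηV : η ∈ V := P_mem V ξ
  have hζo : ζ ∈ Vᗮ := Submodule.sub_starProjection_mem_orthogonal ξ
  have hηζ : ⟪η, ζ⟫ = 0 := (Submodule.mem_orthogonal V ζ).1 hζo η hηV
  have hF := kraus_inner_re hKraus hUnital (P V) ξ
  have hG1 := unital_inner_re hKraus hUnital η η
  have hG2 := unital_inner_re hKraus hUnital ζ η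
  have hG : HasSum (fun k => re ⟪l k η, l k η⟫ + 2 * re ⟪l k η, l k ζ⟫)
      (re ⟪η, η⟫ + 2 * re ⟪η, ζ⟫) := hG1.add (hG2.mul_left 2)
  have hterm : ∀ k, re ⟪l k η, l k η⟫ + 2 * re ⟪l k η, l k ζ⟫ ≤ re ⟪l k ξ, P V (l k ξ)⟫ := by
    intro k
    have hsplit : l k ξ = l k η + l k ζ := by
      rw [← map_add]; congr 1; rw [hη, hζ]; abel
    have hPη : P V (l k η) = l k η := P_eq_self (hInv k η hηV)
    have hPsum : P V (l k ξ) = l k η + P V (l k ζ) := by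
      rw [hsplit, map_add, hPη]
    have hcross : re ⟪l k η, P V (l k ζ)⟫ = re ⟪l k η, l k ζ⟫ := by
      have h1 : ⟪l k η, P V (l k ζ)⟫ = ⟪P V (l k η), l k ζ⟫ := (sa_move hPsa _ _).symm
      rw [h1, hPη]
    have hnorm : re ⟪l k ξ, P V (l k ξ)⟫ = ‖P V (l k ξ)‖ ^ 2 :=
      inner_proj_self hPidem hPsa _
    have hexp : ‖P V (l k ξ)‖ ^ 2
        = ‖l k η‖ ^ 2 + 2 * re ⟪l k η, P V (l k ζ)⟫ + ‖P V (l k ζ)‖ ^ 2 := by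
      rw [hPsum]; exact norm_add_sq (𝕜 := ℂ) _ _
    have h2 : re ⟪l k η, l k η⟫ = ‖l k η‖ ^ 2 := inner_self_eq_norm_sq (𝕜 := ℂ) _
    rw [hnorm, hexp, hcross, h2]
    nlinarith [sq_nonneg ‖P V (l k ζ)‖]
  have hmain : re ⟪η, η⟫ + 2 * re ⟪η, ζ⟫ ≤ re ⟪ξ, τ (P V) ξ⟫ := hasSum_le hterm hG hF
  rw [hηζ] at hmain
  simp only [map_zero, mul_zero, add_zero] at hmain
  have hP : re ⟪ξ, P V ξ⟫ = ‖P V ξ‖ ^ 2 := inner_proj_self hPidem hPsa ξ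
  have hη2 : re ⟪η, η⟫ = ‖η‖ ^ 2 := inner_self_eq_norm_sq (𝕜 := ℂ) _
  rw [reApplyInnerSelf, inner_re_symm]
  simp only [ContinuousLinearMap.sub_apply, inner_sub_right, map_sub]
  rw [hη2] at hmain
  rw [hP]
  linarith

end Kraus


section Families

variable (l)

def Inv (W : Submodule ℂ H) : Prop := ∀ k, ∀ v ∈ W, l k v ∈ W

variable {l}

lemma exists_min_inv (K : Submodule ℂ H) (hK : K ≠ ⊥) (hInvK : Inv l K) :
    ∃ V : Submodule ℂ H, V ≤ K ∧ V ≠ ⊥ ∧ Inv l V ∧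
      ∀ W, Inv l W → W ≤ V → W ≠ ⊥ → W = V := by
  set S : Set ℕ :=
    {d | ∃ V : Submodule ℂ H, (V ≤ K ∧ V ≠ ⊥ ∧ Inv l V) ∧ Module.finrank ℂ V = d} with hS
  have hSne : S.Nonempty := ⟨Module.finrank ℂ K, K, ⟨le_rfl, hK, hInvK⟩, rfl⟩
  obtain ⟨V, ⟨hVK, hV0, hVInv⟩, hVrank⟩ := Nat.sInf_mem hSne
  refine ⟨V, hVK, hV0, hVInv, ?_⟩
  intro W hWInv hWV hW0
  by_contra hne
  have hlt : W < V := lt_of_le_of_ne hWV hne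
  have h1 : Module.finrank ℂ W < Module.finrank ℂ V :=
    Submodule.finrank_lt_finrank_of_lt hlt
  have h2 : Module.finrank ℂ ↥W ∈ S := ⟨W, ⟨hWV.trans hVK, hW0, hWInv⟩, rfl⟩
  have := Nat.sInf_le h2
  omega

lemma isPositive_sum {ι : Type*} (s : Finset ι) (f : ι → H →L[ℂ] H)
    (h : ∀ i ∈ s, (f i).IsPositive) : (∑ i ∈ s, f i).IsPositive := by
  classical
  induction s using Finset.induction_on with
  | empty => simpa using isPositive_zero
  | insert _ _ hx ih =>
    rw [Finset.sum_insert hx]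
    exact (h _ (Finset.mem_insert_self _ _)).add
      (ih (fun i hi => h i (Finset.mem_insert_of_mem hi)))

variable {m : ℕ} (V : Fin m → Submodule ℂ H)

noncomputable def qop : H →L[ℂ] H := ∑ i, P (V i)

lemma qop_sa : IsSelfAdjoint (qop V) := by
  unfold qop
  rw [IsSelfAdjoint, star_sum]
  exact Finset.sum_congr rfl (fun i _ => P_sa (V i))

lemma qop_inner_eq (horth : ∀ i j, i ≠ j → ∀ v ∈ V i, ∀ w ∈ V j, ⟪v, w⟫ = 0) (ξ : H) :
    re (⟪ξ, qop V ξ⟫ : ℂ) = ∑ i, ‖P (V i) ξ‖ ^ 2 ∧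
    ‖qop V ξ‖ ^ 2 = ∑ i, ‖P (V i) ξ‖ ^ 2 := by
  have happ : qop V ξ = ∑ i, P (V i) ξ := by
    unfold qop; rw [ContinuousLinearMap.sum_apply]
  constructor
  · have h1 : (⟪ξ, qop V ξ⟫ : ℂ) = ∑ i, (⟪ξ, P (V i) ξ⟫ : ℂ) := by
      rw [happ, inner_sum]
    rw [h1, map_sum]
    exact Finset.sum_congr rfl (fun i _ => inner_proj_self (P_idem (V i)) (P_sa (V i)) ξ)
  · have h2 : (⟪qop V ξ, qop V ξ⟫ : ℂ) = ∑ i, (⟪P (V i) ξ, qop V ξ⟫ : ℂ) := by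
      rw [happ, sum_inner, ← happ]
    have h3 : ∀ i, (⟪P (V i) ξ, qop V ξ⟫ : ℂ) = ((‖P (V i) ξ‖ ^ 2 : ℝ) : ℂ) := by
      intro i
      rw [happ, inner_sum]
      rw [Finset.sum_eq_single i]
      · rw [inner_self_eq_norm_sq_to_K]; norm_num
      · intro j _ hji
        exact horth i j (fun h => hji (h ▸ rfl)) _ (P_mem (V i) ξ) _ (P_mem (V j) ξ)
      · intro h; exact absurd (Finset.mem_univ i) h
    have h4 : ‖qop V ξ‖ ^ 2 = re (⟪qop V ξ, qop V ξ⟫ : ℂ) :=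
      (inner_self_eq_norm_sq (𝕜 := ℂ) _).symm
    rw [h4, h2, map_sum]
    apply Finset.sum_congr rfl
    intro i _
    rw [h3 i]
    exact RCLike.ofReal_re _

lemma qop_pos (horth : ∀ i j, i ≠ j → ∀ v ∈ V i, ∀ w ∈ V j, ⟪v, w⟫ = 0) :
    (qop V).IsPositive := by
  refine ⟨ContinuousLinearMap.isSelfAdjoint_iff_isSymmetric.1 (qop_sa V), fun ξ => ?_⟩
  rw [reApplyInnerSelf, inner_re_symm, (qop_inner_eq V horth ξ).1]
  positivity

lemma qop_le_one (horth : ∀ i j, i ≠ j → ∀ v ∈ V i, ∀ w ∈ V j, ⟪v, w⟫ = 0) :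
    (1 - qop V).IsPositive := by
  have hsa : IsSelfAdjoint (1 - qop V) := (IsSelfAdjoint.one _).sub (qop_sa V)
  refine ⟨ContinuousLinearMap.isSelfAdjoint_iff_isSymmetric.1 hsa, fun ξ => ?_⟩
  rw [reApplyInnerSelf, inner_re_symm]
  simp only [ContinuousLinearMap.sub_apply, ContinuousLinearMap.one_apply,
    inner_sub_right, map_sub]
  obtain ⟨h1, h2⟩ := qop_inner_eq V horth ξ
  have h3 : ‖qop V ξ‖ ≤ ‖ξ‖ := by
    by_cases h0 : qop V ξ = 0
    · rw [h0]; simp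
    have h4 : ‖qop V ξ‖ ^ 2 ≤ ‖ξ‖ * ‖qop V ξ‖ := by
      rw [h2, ← h1]
      exact (RCLike.re_le_norm _).trans (norm_inner_le_norm _ _)
    have h5 : 0 < ‖qop V ξ‖ := norm_pos_iff.2 h0
    nlinarith
  have h6 : re (⟪ξ, ξ⟫ : ℂ) = ‖ξ‖ ^ 2 := inner_self_eq_norm_sq (𝕜 := ℂ) _
  rw [h1, h6, ← h2]
  nlinarith [norm_nonneg (qop V ξ), norm_nonneg ξ]

end Families


def Concl (τ : (H →L[ℂ] H) → (H →L[ℂ] H)) : Prop :=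
  ∃ (m : ℕ) (p : Fin m → (H →L[ℂ] H)),
    (∀ i, p i * p i = p i ∧ IsSelfAdjoint (p i)) ∧
    (∀ i, p i ≠ 0 ∧ (τ (p i) - p i).IsPositive) ∧
    (∀ i, ¬ ∃ q : H →L[ℂ] H, q * q = q ∧ IsSelfAdjoint q ∧
      (τ q - q).IsPositive ∧ q ≠ 0 ∧ q ≠ p i ∧ (p i - q).IsPositive) ∧
    (∀ i j, i ≠ j → p i * p j = 0) ∧
    (∃ y : H →L[ℂ] H,
      Filter.Tendsto (fun n => τ^[n] (∑ i, p i)) Filter.atTop (nhds y) ∧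
      Function.Injective y)


section Convergence

lemma eval_tendsto {u : ℕ → H →L[ℂ] H} {b : H →L[ℂ] H}
    (hu : Tendsto u atTop (𝓝 b)) (ξ : H) :
    Tendsto (fun n => u n ξ) atTop (𝓝 (b ξ)) := by
  rw [tendsto_iff_norm_sub_tendsto_zero] at hu ⊢
  apply squeeze_zero (fun n => norm_nonneg _) (g := fun n => ‖u n - b‖ * ‖ξ‖)
  · intro n
    calc ‖u n ξ - b ξ‖ = ‖(u n - b) ξ‖ := by rw [ContinuousLinearMap.sub_apply]
      _ ≤ ‖u n - b‖ * ‖ξ‖ := (u n - b).le_opNorm ξ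
  · simpa using hu.mul_const ‖ξ‖

lemma form_tendsto {u : ℕ → H →L[ℂ] H} {b : H →L[ℂ] H}
    (hu : Tendsto u atTop (𝓝 b)) (ξ : H) :
    Tendsto (fun n => (⟪ξ, u n ξ⟫ : ℂ)) atTop (𝓝 ⟪ξ, b ξ⟫) :=
  Filter.Tendsto.inner tendsto_const_nhds (eval_tendsto hu ξ)

lemma form_re_tendsto {u : ℕ → H →L[ℂ] H} {b : H →L[ℂ] H}
    (hu : Tendsto u atTop (𝓝 b)) (ξ : H) :
    Tendsto (fun n => re (⟪ξ, u n ξ⟫ : ℂ)) atTop (𝓝 (re (⟪ξ, b ξ⟫ : ℂ))) :=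
  (Complex.continuous_re.tendsto _).comp (form_tendsto hu ξ)

lemma real_limit {u : ℕ → H →L[ℂ] H} {b : H →L[ℂ] H}
    (hu : Tendsto u atTop (𝓝 b)) (hsa : ∀ n, IsSelfAdjoint (u n)) (ξ : H) :
    (starRingEnd ℂ) ⟪ξ, b ξ⟫ = ⟪ξ, b ξ⟫ := by
  have h1 : Tendsto (fun n => (starRingEnd ℂ) (⟪ξ, u n ξ⟫ : ℂ)) atTop
      (𝓝 ((starRingEnd ℂ) ⟪ξ, b ξ⟫)) :=
    (Complex.continuous_conj.tendsto _).comp (form_tendsto hu ξ)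
  have h2 : (fun n => (starRingEnd ℂ) (⟪ξ, u n ξ⟫ : ℂ)) = fun n => (⟪ξ, u n ξ⟫ : ℂ) := by
    funext n
    rw [pos_inner_real (hsa n) ξ]
    simp
  rw [h2] at h1
  exact tendsto_nhds_unique h1 (form_tendsto hu ξ)

lemma monotone_op_limit (a : ℕ → H →L[ℂ] H)
    (hsa : ∀ n, IsSelfAdjoint (a n))
    (hpos : ∀ n, (a n).IsPositive)
    (hmono : ∀ n, (a (n + 1) - a n).IsPositive)
    (hbd : ∀ n ξ, ‖a n ξ‖ ≤ ‖ξ‖) :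
    ∃ y : H →L[ℂ] H, Tendsto a atTop (𝓝 y) ∧ y.IsPositive ∧
      (∀ ξ, Tendsto (fun n => re (⟪ξ, a n ξ⟫ : ℂ)) atTop (𝓝 (re (⟪ξ, y ξ⟫ : ℂ)))) ∧
      (∀ ξ n, re (⟪ξ, a n ξ⟫ : ℂ) ≤ re (⟪ξ, y ξ⟫ : ℂ)) := by
  set g : H → ℕ → ℝ := fun ξ n => re (⟪ξ, a n ξ⟫ : ℂ) with hg
  have hmg : ∀ ξ, Monotone (g ξ) := by
    intro ξ
    apply monotone_nat_of_le_succ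
    intro n
    have h0 := (hmono n).2 ξ
    rw [reApplyInnerSelf, inner_re_symm] at h0
    simp only [ContinuousLinearMap.sub_apply, inner_sub_right, map_sub] at h0
    simp only [hg]
    linarith
  have hub : ∀ ξ n, g ξ n ≤ ‖ξ‖ ^ 2 := by
    intro ξ n
    have h1 : g ξ n ≤ ‖(⟪ξ, a n ξ⟫ : ℂ)‖ := RCLike.re_le_norm _
    have h2 : ‖(⟪ξ, a n ξ⟫ : ℂ)‖ ≤ ‖ξ‖ * ‖a n ξ‖ := norm_inner_le_norm _ _
    have h3 : ‖ξ‖ * ‖a n ξ‖ ≤ ‖ξ‖ * ‖ξ‖ := by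
      apply mul_le_mul_of_nonneg_left (hbd n ξ) (norm_nonneg ξ)
    nlinarith
  have hbdd : ∀ ξ, BddAbove (Set.range (g ξ)) := by
    intro ξ
    refine ⟨‖ξ‖ ^ 2, ?_⟩
    rintro x ⟨n, rfl⟩
    exact hub ξ n
  have hgt : ∀ ξ, Tendsto (g ξ) atTop (𝓝 (⨆ n, g ξ n)) := fun ξ =>
    tendsto_atTop_ciSup (hmg ξ) (hbdd ξ)
  have hnorm : ∀ n, a n ∈ Metric.closedBall (0 : H →L[ℂ] H) 1 := by
    intro n
    rw [mem_closedBall_zero_iff]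
    exact ContinuousLinearMap.opNorm_le_bound _ zero_le_one (fun ξ => by
      rw [one_mul]; exact hbd n ξ)
  have hcpt : IsCompact (Metric.closedBall (0 : H →L[ℂ] H) 1) :=
    isCompact_closedBall _ _
  obtain ⟨y, -, φ, hφ, hyt⟩ := hcpt.tendsto_subseq hnorm
  have hyform : ∀ ξ, re (⟪ξ, y ξ⟫ : ℂ) = ⨆ n, g ξ n := by
    intro ξ
    have h1 : Tendsto (fun n => g ξ (φ n)) atTop (𝓝 (re (⟪ξ, y ξ⟫ : ℂ))) :=
      form_re_tendsto hyt ξ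
    have h2 : Tendsto (fun n => g ξ (φ n)) atTop (𝓝 (⨆ n, g ξ n)) :=
      (hgt ξ).comp hφ.tendsto_atTop
    exact tendsto_nhds_unique h1 h2
  have hyreal : ∀ ξ, (starRingEnd ℂ) ⟪ξ, y ξ⟫ = ⟪ξ, y ξ⟫ :=
    real_limit hyt (fun n => hsa (φ n))
  have hconv : Tendsto a atTop (𝓝 y) := by
    apply tendsto_of_subseq_tendsto
    intro ns hns
    obtain ⟨b, -, ψ, hψ, hbt⟩ := hcpt.tendsto_subseq (fun n => hnorm (ns n))
    refine ⟨ψ, ?_⟩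
    have hby : b = y := by
      have hform : ∀ ξ, (⟪ξ, b ξ⟫ : ℂ) = ⟪ξ, y ξ⟫ := by
        intro ξ
        have h1 : Tendsto (fun n => g ξ (ns (ψ n))) atTop (𝓝 (re (⟪ξ, b ξ⟫ : ℂ))) :=
          form_re_tendsto hbt ξ
        have h2 : Tendsto (fun n => g ξ (ns (ψ n))) atTop (𝓝 (⨆ n, g ξ n)) :=
          (hgt ξ).comp (hns.comp hψ.tendsto_atTop)
        have hre : re (⟪ξ, b ξ⟫ : ℂ) = re (⟪ξ, y ξ⟫ : ℂ) := by
          rw [hyform ξ]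
          exact tendsto_nhds_unique h1 h2
        have hbreal : (starRingEnd ℂ) ⟪ξ, b ξ⟫ = ⟪ξ, b ξ⟫ :=
          real_limit hbt (fun n => hsa (ns (ψ n))) ξ
        have him1 : Complex.im ⟪ξ, b ξ⟫ = 0 := Complex.conj_eq_iff_im.1 hbreal
        have him2 : Complex.im ⟪ξ, y ξ⟫ = 0 := Complex.conj_eq_iff_im.1 (hyreal ξ)
        apply Complex.ext
        · exact hre
        · rw [him1, him2]
      have hzero : ∀ ξ, (⟪(b - y) ξ, ξ⟫ : ℂ) = 0 := by
        intro ξ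
        have h3 : (⟪ξ, (b - y) ξ⟫ : ℂ) = 0 := by
          simp only [ContinuousLinearMap.sub_apply, inner_sub_right]
          rw [hform ξ, sub_self]
        rw [← inner_conj_symm, h3, map_zero]
      have h4 : ((b - y : H →L[ℂ] H) : H →ₗ[ℂ] H) = 0 :=
        (inner_map_self_eq_zero _).1 hzero
      have h5 : (b - y : H →L[ℂ] H) = 0 := by
        ext ξ
        have := congrArg (fun f : H →ₗ[ℂ] H => f ξ) h4
        simpa using this
      exact sub_eq_zero.1 h5
    rw [← hby]
    exact hbt
  refine ⟨y, hconv, ?_, ?_, ?_⟩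
  · rw [isPositive_iff_complex]
    intro ξ
    have h1 : (⟪y ξ, ξ⟫ : ℂ) = (starRingEnd ℂ) ⟪ξ, y ξ⟫ := (inner_conj_symm _ _).symm
    have hrepos : 0 ≤ re (⟪ξ, y ξ⟫ : ℂ) := by
      rw [hyform ξ]
      have h0 : g ξ 0 ≤ ⨆ n, g ξ n := le_ciSup (hbdd ξ) 0
      have hp0 : 0 ≤ g ξ 0 := by
        have := (hpos 0).2 ξ
        rw [reApplyInnerSelf, inner_re_symm] at this
        exact this
      linarith
    have him : Complex.im ⟪ξ, y ξ⟫ = 0 := Complex.conj_eq_iff_im.1 (hyreal ξ)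
    have h2 : (⟪y ξ, ξ⟫ : ℂ) = ((re (⟪ξ, y ξ⟫ : ℂ) : ℝ) : ℂ) := by
      rw [h1, hyreal ξ]; exact (Complex.conj_eq_iff_re.1 (hyreal ξ)).symm
    constructor
    · rw [h2]; simp
    · rw [h2]; simpa using hrepos
  · intro ξ
    exact hyform ξ ▸ hgt ξ
  · intro ξ n
    rw [hyform ξ]
    exact le_ciSup (hbdd ξ) n

end Convergence


section Kraus2

variable (hKraus : ∀ (x : H →L[ℂ] H) (ξ : H),
    HasSum (fun k => star (l k) (x ((l k) ξ))) (τ x ξ))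
variable (hUnital : ∀ ξ : H, HasSum (fun k => star (l k) ((l k) ξ)) ξ)

include hKraus hUnital

lemma tau_zero : τ 0 = 0 := by
  have := tau_sub hKraus hUnital (0 : H →L[ℂ] H) 0
  simpa using this

lemma tau_add (x y : H →L[ℂ] H) : τ (x + y) = τ x + τ y := by
  have h := tau_sub hKraus hUnital (x + y) y
  rw [add_sub_cancel_right] at h
  rw [eq_sub_iff_add_eq] at h
  exact h.symm

lemma tau_sum {ι : Type*} (s : Finset ι) (f : ι → H →L[ℂ] H) :
    τ (∑ i ∈ s, f i) = ∑ i ∈ s, τ (f i) := by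
  classical
  induction s using Finset.induction_on with
  | empty => simpa using tau_zero hKraus hUnital
  | insert _ _ hx ih =>
    rw [Finset.sum_insert hx, Finset.sum_insert hx, tau_add hKraus hUnital, ih]

lemma subharmonic_qop {m : ℕ} (V : Fin m → Submodule ℂ H)
    (hInv : ∀ i, Inv l (V i)) : (τ (qop V) - qop V).IsPositive := by
  have h1 : τ (qop V) - qop V = ∑ i, (τ (P (V i)) - P (V i)) := by
    unfold qop
    rw [tau_sum hKraus hUnital, Finset.sum_sub_distrib]
  rw [h1]
  exact isPositive_sum _ _ (fun i _ => subharmonic_P hKraus hUnital (hInv i))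

lemma iter_props (q : H →L[ℂ] H) (hq_pos : q.IsPositive) (hq1 : (1 - q).IsPositive)
    (hqsub : (τ q - q).IsPositive) (n : ℕ) :
    (τ^[n] q).IsPositive ∧ (1 - τ^[n] q).IsPositive ∧
      (τ^[n + 1] q - τ^[n] q).IsPositive := by
  induction n with
  | zero => exact ⟨hq_pos, hq1, by simpa using hqsub⟩
  | succ n ih =>
    have e : τ^[n + 1] q = τ (τ^[n] q) := Function.iterate_succ_apply' τ n q
    have e2 : τ^[n + 2] q = τ (τ^[n + 1] q) := Function.iterate_succ_apply' τ (n + 1) q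
    refine ⟨?_, ?_, ?_⟩
    · rw [e]; exact tau_pos hKraus hUnital ih.1
    · rw [e]
      have h3 : (1 : H →L[ℂ] H) - τ (τ^[n] q) = τ (1 - τ^[n] q) := by
        rw [tau_sub hKraus hUnital, tau_one hKraus hUnital]
      rw [h3]
      exact tau_pos hKraus hUnital ih.2.1
    · rw [e2]
      nth_rewrite 2 [e]
      rw [← tau_sub hKraus hUnital]
      exact tau_pos hKraus hUnital ih.2.2

lemma not_smaller {V : Submodule ℂ H}
    (hmin : ∀ W, Inv l W → W ≤ V → W ≠ ⊥ → W = V) :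
    ¬ ∃ q : H →L[ℂ] H, q * q = q ∧ IsSelfAdjoint q ∧
      (τ q - q).IsPositive ∧ q ≠ 0 ∧ q ≠ P V ∧ (P V - q).IsPositive := by
  rintro ⟨q, hq, hqsa, hqsub, hq0, hqne, hle⟩
  have hWInv : Inv l (fixSpace q) := fun k v hv =>
    fix_invariant hKraus hUnital hq hqsa hqsub k hv
  have hWV : fixSpace q ≤ V := by
    intro v hv
    rw [mem_fixSpace] at hv
    have h := fix_le (P_idem V) (P_sa V) hq hqsa hle hv
    rw [← fixSpace_P V]
    exact mem_fixSpace.2 h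
  have hW0 : fixSpace q ≠ ⊥ := by
    rw [Submodule.ne_bot_iff]
    have hex : ∃ ξ, q ξ ≠ 0 := by
      by_contra hall
      push_neg at hall
      exact hq0 (ContinuousLinearMap.ext fun ξ => by simp [hall ξ])
    obtain ⟨ξ, hξ⟩ := hex
    exact ⟨q ξ, mem_fixSpace.2 (by rw [← ContinuousLinearMap.mul_apply, hq]), hξ⟩
  have hWeq := hmin _ hWInv hWV hW0
  exact hqne (proj_eq_of_fixSpace_eq hq hqsa (P_idem V) (P_sa V)
    (by rw [hWeq, fixSpace_P]))

lemma main_step {m : ℕ} (V : Fin m → Submodule ℂ H)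
    (h0 : ∀ i, V i ≠ ⊥) (hInv : ∀ i, Inv l (V i))
    (hmin : ∀ i, ∀ W, Inv l W → W ≤ V i → W ≠ ⊥ → W = V i)
    (horth : ∀ i j, i ≠ j → ∀ v ∈ V i, ∀ w ∈ V j, ⟪v, w⟫ = 0) :
    Concl τ ∨ ∃ V' : Fin (m + 1) → Submodule ℂ H,
      ((∀ i, V' i ≠ ⊥) ∧ (∀ i, Inv l (V' i)) ∧
       (∀ i, ∀ W, Inv l W → W ≤ V' i → W ≠ ⊥ → W = V' i) ∧
       (∀ i j, i ≠ j → ∀ v ∈ V' i, ∀ w ∈ V' j, ⟪v, w⟫ = 0)) ∧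
      Module.finrank ℂ ↥(⨅ i, (V' i)ᗮ) < Module.finrank ℂ ↥(⨅ i, (V i)ᗮ) := by
  set q := qop V with hqdef
  have hq_pos := qop_pos V horth
  have hq1 := qop_le_one V horth
  have hqsub := subharmonic_qop hKraus hUnital V hInv
  set a : ℕ → H →L[ℂ] H := fun n => τ^[n] q with hadef
  have hprops : ∀ n, (a n).IsPositive ∧ (1 - a n).IsPositive ∧
      (a (n + 1) - a n).IsPositive := fun n =>
    iter_props hKraus hUnital q hq_pos hq1 hqsub n
  obtain ⟨y, hconv, hypos, hyformt, hyle⟩ := monotone_op_limit a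
    (fun n => (hprops n).1.isSelfAdjoint) (fun n => (hprops n).1)
    (fun n => (hprops n).2.2) (fun n => pos_le_of_norm (hprops n).1 (hprops n).2.1)
  by_cases hinj : Function.Injective y
  · left
    refine ⟨m, fun i => P (V i), fun i => ⟨P_idem (V i), P_sa (V i)⟩,
      fun i => ⟨P_ne_zero (h0 i), subharmonic_P hKraus hUnital (hInv i)⟩,
      fun i => not_smaller hKraus hUnital (hmin i), ?_, ⟨y, ?_, hinj⟩⟩
    · intro i j hij
      ext ξ
      simp only [ContinuousLinearMap.mul_apply, ContinuousLinearMap.zero_apply]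
      exact P_eq_zero_of_orth (fun u hu => horth i j hij u hu _ (P_mem (V j) ξ))
    · exact hconv
  · right
    have hker0 : LinearMap.ker (y : H →ₗ[ℂ] H) ≠ ⊥ := by
      intro h
      exact hinj (LinearMap.ker_eq_bot.1 h)
    have hforms0 : ∀ ξ ∈ LinearMap.ker (y : H →ₗ[ℂ] H), ∀ n, re (⟪ξ, a n ξ⟫ : ℂ) = 0 := by
      intro ξ hξ n
      have h1 : y ξ = 0 := LinearMap.mem_ker.1 hξ
      have h2 : re (⟪ξ, y ξ⟫ : ℂ) = 0 := by rw [h1]; simp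
      have h3 := hyle ξ n
      have h4 : 0 ≤ re (⟪ξ, a n ξ⟫ : ℂ) := pos_re_inner_nonneg (hprops n).1 ξ
      linarith [h2 ▸ h3]
    have hkerInv : Inv l (LinearMap.ker (y : H →ₗ[ℂ] H)) := by
      intro k ξ hξ
      rw [LinearMap.mem_ker]
      apply pos_inner_zero hypos
      have hzn : ∀ n, re (⟪l k ξ, a n (l k ξ)⟫ : ℂ) = 0 := by
        intro n
        have h5 : a (n + 1) = τ (a n) := Function.iterate_succ_apply' τ n q
        have h6 : re (⟪ξ, τ (a n) ξ⟫ : ℂ) = 0 := by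
          rw [← h5]; exact hforms0 ξ hξ (n + 1)
        have h7 := kraus_inner_re hKraus hUnital (a n) ξ
        rw [h6] at h7
        have hub := le_hasSum h7 k
          (fun j _ => pos_re_inner_nonneg (hprops n).1 (l j ξ))
        have hlb := pos_re_inner_nonneg (hprops n).1 (l k ξ)
        linarith
      have h8 : Tendsto (fun n => re (⟪l k ξ, a n (l k ξ)⟫ : ℂ)) atTop
          (𝓝 (re (⟪l k ξ, y (l k ξ)⟫ : ℂ))) := hyformt (l k ξ)
      have h9 : Tendsto (fun _ : ℕ => (0 : ℝ)) atTop (𝓝 (0 : ℝ)) := tendsto_const_nhds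
      have h10 : (fun n => re (⟪l k ξ, a n (l k ξ)⟫ : ℂ)) = fun _ : ℕ => (0 : ℝ) := by
        funext n; exact hzn n
      rw [h10] at h8
      exact tendsto_nhds_unique h8 h9
    have hkerP : ∀ ξ ∈ LinearMap.ker (y : H →ₗ[ℂ] H), ∀ i, P (V i) ξ = 0 := by
      intro ξ hξ i
      have h1 := hforms0 ξ hξ 0
      have h2 : a 0 = q := rfl
      rw [h2] at h1
      rw [(qop_inner_eq V horth ξ).1] at h1
      have h3 : ∀ j ∈ Finset.univ, (0:ℝ) ≤ ‖P (V j) ξ‖ ^ 2 := fun j _ => sq_nonneg _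
      have h4 := (Finset.sum_eq_zero_iff_of_nonneg h3).1 h1 i (Finset.mem_univ i)
      have := pow_eq_zero_iff (n := 2) (by norm_num) |>.1 h4
      exact norm_eq_zero.1 this
    have hkerOrth : ∀ ξ ∈ LinearMap.ker (y : H →ₗ[ℂ] H), ∀ i, ∀ v ∈ V i, ⟪v, ξ⟫ = 0 := by
      intro ξ hξ i v hv
      calc ⟪v, ξ⟫ = ⟪P (V i) v, ξ⟫ := by rw [P_eq_self hv]
        _ = ⟪v, P (V i) ξ⟫ := sa_move (P_sa (V i)) v ξ
        _ = 0 := by rw [hkerP ξ hξ i, inner_zero_right]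
    obtain ⟨Vn, hVnK, hVn0, hVnInv, hVnMin⟩ := exists_min_inv (LinearMap.ker (y : H →ₗ[ℂ] H)) hker0 hkerInv
    refine ⟨Fin.snoc V Vn, ⟨?_, ?_, ?_, ?_⟩, ?_⟩
    · intro i
      refine Fin.lastCases ?_ ?_ i
      · rw [Fin.snoc_last]; exact hVn0
      · intro j; rw [Fin.snoc_castSucc]; exact h0 j
    · intro i
      refine Fin.lastCases ?_ ?_ i
      · rw [Fin.snoc_last]; exact hVnInv
      · intro j; rw [Fin.snoc_castSucc]; exact hInv j
    · intro i
      refine Fin.lastCases ?_ ?_ i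
      · rw [Fin.snoc_last]; exact hVnMin
      · intro j; rw [Fin.snoc_castSucc]; exact hmin j
    · intro i j hij
      rcases Fin.eq_castSucc_or_eq_last i with ⟨i', rfl⟩ | rfl <;>
        rcases Fin.eq_castSucc_or_eq_last j with ⟨j', rfl⟩ | rfl
      · simp only [Fin.snoc_castSucc]
        exact horth i' j' (fun h => hij (by rw [h]))
      · simp only [Fin.snoc_castSucc, Fin.snoc_last]
        intro v hv w hw
        exact hkerOrth w (hVnK hw) i' v hv
      · simp only [Fin.snoc_castSucc, Fin.snoc_last]
        intro v hv w hw
        rw [← inner_conj_symm, hkerOrth v (hVnK hv) j' w hw, map_zero]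
      · exact absurd rfl hij
    · have hU'le : (⨅ i : Fin (m + 1), ((Fin.snoc V Vn : Fin (m+1) → Submodule ℂ H) i)ᗮ)
          ≤ (⨅ i : Fin m, (V i)ᗮ) ⊓ Vnᗮ := by
        apply le_inf
        · apply le_iInf
          intro i
          have := iInf_le (fun j : Fin (m+1) =>
            ((Fin.snoc V Vn : Fin (m+1) → Submodule ℂ H) j)ᗮ) i.castSucc
          rwa [Fin.snoc_castSucc] at this
        · have := iInf_le (fun j : Fin (m+1) =>
            ((Fin.snoc V Vn : Fin (m+1) → Submodule ℂ H) j)ᗮ) (Fin.last m)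
          rwa [Fin.snoc_last] at this
      have hlt : (⨅ i : Fin (m + 1), ((Fin.snoc V Vn : Fin (m+1) → Submodule ℂ H) i)ᗮ)
          < (⨅ i : Fin m, (V i)ᗮ) := by
        obtain ⟨w, hwVn, hw0⟩ := Submodule.exists_mem_ne_zero_of_ne_bot hVn0
        apply lt_of_le_of_ne (hU'le.trans inf_le_left)
        intro heq
        have hwU : w ∈ ⨅ i : Fin m, (V i)ᗮ := by
          rw [Submodule.mem_iInf]
          intro i
          rw [Submodule.mem_orthogonal]
          intro u hu
          exact hkerOrth w (hVnK hwVn) i u hu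
        rw [← heq] at hwU
        have hwVno : w ∈ Vnᗮ := (hU'le hwU).2
        rw [Submodule.mem_orthogonal] at hwVno
        exact hw0 (inner_self_eq_zero.1 (hwVno w hwVn))
      exact Submodule.finrank_lt_finrank_of_lt hlt
  
lemma main_aux : ∀ d : ℕ, ∀ m : ℕ, ∀ V : Fin m → Submodule ℂ H,
    (∀ i, V i ≠ ⊥) → (∀ i, Inv l (V i)) →
    (∀ i, ∀ W, Inv l W → W ≤ V i → W ≠ ⊥ → W = V i) →
    (∀ i j, i ≠ j → ∀ v ∈ V i, ∀ w ∈ V j, ⟪v, w⟫ = 0) →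
    Module.finrank ℂ ↥(⨅ i, (V i)ᗮ) ≤ d → Concl τ := by
  intro d
  induction d with
  | zero =>
    intro m V h0 hInv hmin horth hd
    rcases main_step hKraus hUnital V h0 hInv hmin horth with h | ⟨V', _, hlt⟩
    · exact h
    · omega
  | succ d ih =>
    intro m V h0 hInv hmin horth hd
    rcases main_step hKraus hUnital V h0 hInv hmin horth with
      h | ⟨V', ⟨h0', hInv', hmin', horth'⟩, hlt⟩
    · exact h
    · exact ih (m + 1) V' h0' hInv' hmin' horth' (by omega)

lemma main_final : Concl τ := by
  apply main_aux hKraus hUnital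
    (Module.finrank ℂ ↥(⨅ i : Fin 0, ((fun _ : Fin 0 => (⊥ : Submodule ℂ H)) i)ᗮ)) 0
    (fun _ => ⊥)
  · intro i; exact i.elim0
  · intro i; exact i.elim0
  · intro i; exact i.elim0
  · intro i; exact i.elim0
  · exact le_rfl


end Kraus2

end SHP


/- STATEMENT 12: H finite dimensional. There exists a finite family of
mutually orthogonal minimal (recurrent) sub-harmonic projections p_1,…,p_m
such that y = lim τ^n(p_1 + ⋯ + p_m) is injective (1 − ∑ p_i is metastable). -/

theorem finiteDim_resolution_into_recurrent_and_metastable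
    {H : Type*} [NormedAddCommGroup H] [InnerProductSpace ℂ H]
    [FiniteDimensional ℂ H]
    (τ : (H →L[ℂ] H) → (H →L[ℂ] H)) (l : ℕ → H →L[ℂ] H)
    (hKraus : ∀ (x : H →L[ℂ] H) (ξ : H),
      HasSum (fun k => star (l k) (x ((l k) ξ))) (τ x ξ))
    (hUnital : ∀ ξ : H, HasSum (fun k => star (l k) ((l k) ξ)) ξ) :
    ∃ (m : ℕ) (p : Fin m → (H →L[ℂ] H)),
      (∀ i, p i * p i = p i ∧ IsSelfAdjoint (p i)) ∧
      -- each p i is a non-zero sub-harmonic projection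
      (∀ i, p i ≠ 0 ∧ (τ (p i) - p i).IsPositive) ∧
      -- each p i is minimal sub-harmonic (recurrent)
      (∀ i, ¬ ∃ q : H →L[ℂ] H, q * q = q ∧ IsSelfAdjoint q ∧
        (τ q - q).IsPositive ∧ q ≠ 0 ∧ q ≠ p i ∧ (p i - q).IsPositive) ∧
      -- mutual orthogonality
      (∀ i j, i ≠ j → p i * p j = 0) ∧
      -- 1 − ∑ p_i is metastable: the limit of τ^n(∑ p_i) is injective
      (∃ y : H →L[ℂ] H,
        Filter.Tendsto (fun n => τ^[n] (∑ i, p i)) Filter.atTop (nhds y) ∧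
        Function.Injective y) := by
  obtain ⟨m, p, h1, h2, h3, h4, h5⟩ := SHP.main_final hKraus hUnital
  exact ⟨m, p, h1, h2, h3, h4, h5⟩
end

section
/- Let p be a sub-harmonic projection for (τ_t = exp(tL))_{t≥0} and let y be the strong limit of τ_t(p) as t → ∞. Setting L_0 = Y, for any z ∈ B(H) the following are equivalent: (a) y·z = 0; (b) p·z = 0 and p·L_{i_1}·L_{i_2}·⋯·L_{i_n}·z = 0 for every n ≥ 1 and all indices i_1, …, i_n ∈ {0, 1, 2, …}. -/
set_option maxHeartbeats 1000000
set_option synthInstance.maxHeartbeats 1000000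

open scoped InnerProductSpace ComplexConjugate
open ContinuousLinearMap NormedSpace Filter

section Aux

variable {H : Type*} [NormedAddCommGroup H] [InnerProductSpace ℂ H] [CompleteSpace H]

lemma adj_swap {y : H →L[ℂ] H} (hsa : IsSelfAdjoint y) (a b : H) :
    ⟪y a, b⟫_ℂ = ⟪a, y b⟫_ℂ := by
  conv_lhs => rw [← hsa.adjoint_eq]
  exact ContinuousLinearMap.adjoint_inner_left y b a

lemma star_inner_move (A : H →L[ℂ] H) (a b : H) :
    ⟪a, (star A) b⟫_ℂ = ⟪A a, b⟫_ℂ := by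
  rw [ContinuousLinearMap.star_eq_adjoint]
  exact ContinuousLinearMap.adjoint_inner_right A a b

lemma pos_ker {y : H →L[ℂ] H} (hy : y.IsPositive) {ζ : H}
    (h : Complex.re (⟪y ζ, ζ⟫_ℂ) = 0) : y ζ = 0 := by
  set a := y ζ with ha
  set c := Complex.re (⟪y a, a⟫_ℂ) with hc
  have hc0 : 0 ≤ c := hy.2 a
  have key : ∀ t : ℝ, 0 ≤ 2 * t * ‖a‖ ^ 2 + t ^ 2 * c := by
    intro t
    have h0 := hy.2 (ζ + (t : ℂ) • a)
    rw [reApplyInnerSelf] at h0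
    have e1 : ⟪y ζ, a⟫_ℂ = ((‖a‖ ^ 2 : ℝ) : ℂ) := by
      rw [← ha, inner_self_eq_norm_sq_to_K]; norm_cast
    have e2 : ⟪y a, ζ⟫_ℂ = ((‖a‖ ^ 2 : ℝ) : ℂ) := by
      rw [adj_swap hy.isSelfAdjoint a ζ, ← ha, ← inner_conj_symm, inner_self_eq_norm_sq_to_K]
      push_cast; simp
    rw [map_add, map_smul, inner_add_left, inner_add_right, inner_add_right,
      inner_smul_left, inner_smul_right, inner_smul_left, inner_smul_right,
      e1, e2] at h0
    simp only [Complex.conj_ofReal, smul_eq_mul, RCLike.re_to_complex, Complex.add_re,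
      Complex.mul_re, Complex.ofReal_re, Complex.ofReal_im] at h0
    rw [ha] at h
    nlinarith [h, h0]
  set A := ‖a‖ ^ 2 with hA
  have hApos : 0 ≤ A := by positivity
  have hle : ∀ ε : ℝ, 0 < ε → 2 * A ≤ ε * c := by
    intro ε hε
    nlinarith [key (-ε)]
  have hA0 : A = 0 := by
    by_contra hne
    have hA1 : 0 < A := lt_of_le_of_ne hApos (Ne.symm hne)
    have hcp : (0:ℝ) < c + 1 := by linarith
    have h2 := hle (A / (c + 1)) (by positivity)
    rw [div_mul_eq_mul_div, le_div_iff₀ hcp] at h2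
    nlinarith [mul_pos hA1 hcp]
  have : ‖a‖ = 0 := by nlinarith [norm_nonneg a]
  simpa [ha] using norm_eq_zero.mp this

lemma deriv_limit_zero {f φ : ℝ → ℂ} {a b : ℂ}
    (hf : ∀ t : ℝ, HasDerivAt f (φ t) t)
    (hfa : Tendsto f atTop (nhds a))
    (hφb : Tendsto φ atTop (nhds b)) : b = 0 := by
  have key : ∀ ε : ℝ, 0 < ε → ‖b‖ ≤ 2 * ε := by
    intro ε hε
    obtain ⟨T, hT⟩ := (Metric.tendsto_atTop.mp hφb) ε hε
    have hstep : ∀ t : ℝ, T ≤ t → ‖f (t + 1) - f t - b‖ ≤ ε := by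
      intro t ht
      have hg : ∀ s ∈ Set.Icc t (t + 1),
          HasDerivWithinAt (fun u : ℝ => f u - u • b) (φ s - b) (Set.Icc t (t + 1)) s := by
        intro s _
        exact ((hf s).sub (by simpa using (hasDerivAt_id s).smul_const b)).hasDerivWithinAt
      have hbound : ∀ s ∈ Set.Icc t (t + 1), ‖φ s - b‖ ≤ ε := by
        intro s hs
        have h1 : T ≤ s := le_trans ht hs.1
        have h2 := hT s h1
        rw [dist_eq_norm] at h2
        exact h2.le
      have h2 := Convex.norm_image_sub_le_of_norm_hasDerivWithin_le hg hbound
        (convex_Icc t (t + 1)) (Set.left_mem_Icc.mpr (by linarith))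
        (Set.right_mem_Icc.mpr (by linarith))
      have e : f (t + 1) - (t + 1) • b - (f t - t • b) = f (t + 1) - f t - b := by
        module
      rw [e] at h2
      simpa using h2
    have hdiff : Tendsto (fun t : ℝ => f (t + 1) - f t) atTop (nhds 0) := by
      have h1 : Tendsto (fun t : ℝ => f (t + 1)) atTop (nhds a) :=
        hfa.comp (tendsto_atTop_add_const_right atTop 1 tendsto_id)
      simpa using h1.sub hfa
    obtain ⟨T', hT'⟩ := (Metric.tendsto_atTop.mp hdiff) ε hε
    set t := max T T'
    have h1 := hstep t (le_max_left _ _)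
    have h2 := hT' t (le_max_right _ _)
    rw [dist_eq_norm, sub_zero] at h2
    calc ‖b‖ = ‖(f (t+1) - f t) - (f (t+1) - f t - b)‖ := by ring_nf
    _ ≤ ‖f (t+1) - f t‖ + ‖f (t+1) - f t - b‖ := norm_sub_le _ _
    _ ≤ 2 * ε := by linarith [h2.le]
  have : ‖b‖ ≤ 0 := by
    by_contra hc
    push_neg at hc
    have := key (‖b‖ / 4) (by linarith)
    linarith
  simpa using norm_le_zero_iff.mp this

end Aux

/- STATEMENT 16: p sub-harmonic for (τ_t = exp(tL)), y the strong limit of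
τ_t(p) as t → ∞. With L_0 = Y, for any z: y·z = 0 iff p·z = 0 and
p·L_{i_1}·⋯·L_{i_n}·z = 0 for all n ≥ 1 and indices i_1,…,i_n ∈ {0,1,2,…}. -/

/-- The extended family of operators: index 0 is `Y`, index `k+1` is `L k`,
so that it enumerates `L_0 = Y, L_1, L_2, …`. -/
def extendedFamily {H : Type*} [NormedAddCommGroup H] [InnerProductSpace ℂ H]
    (Y : H →L[ℂ] H) (L : ℕ → H →L[ℂ] H) : ℕ → H →L[ℂ] H
  | 0 => Y
  | (k + 1) => L k

section Aux2

variable {H : Type*} [NormedAddCommGroup H] [InnerProductSpace ℂ H] [CompleteSpace H]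

lemma step_words
    (Y : H →L[ℂ] H) (L : ℕ → H →L[ℂ] H)
    (Φ : (H →L[ℂ] H) →L[ℂ] (H →L[ℂ] H))
    (hΦ : ∀ (x : H →L[ℂ] H) (ξ : H),
      HasSum (fun k => star (L k) (x ((L k) ξ))) (Φ x ξ))
    (𝓛 : (H →L[ℂ] H) →L[ℂ] (H →L[ℂ] H))
    (h𝓛 : ∀ x : H →L[ℂ] H, 𝓛 x = star Y * x + x * Y + Φ x)
    (z x : H →L[ℂ] H)
    (hx : ∀ w : List ℕ, x * (w.map (extendedFamily Y L)).prod * z = 0) :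
    ∀ w : List ℕ, (𝓛 x) * (w.map (extendedFamily Y L)).prod * z = 0 := by
  intro w
  set E := extendedFamily Y L with hE
  set W := (w.map E).prod with hW
  have hY : x * Y * W * z = 0 := by
    have := hx (0 :: w)
    simpa [hW, mul_assoc, hE, extendedFamily] using this
  have hΦ0 : Φ x * W * z = 0 := by
    ext ξ
    have hterm : ∀ k, star (L k) (x ((L k) (W (z ξ)))) = 0 := by
      intro k
      have h0 := hx ((k + 1) :: w)
      have : x * (L k) * W * z = 0 := by
        simpa [hW, mul_assoc, hE, extendedFamily] using h0
      have happ := congrFun (congrArg DFunLike.coe this) ξ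
      simp only [mul_apply_eq_comp, zero_apply] at happ
      rw [happ]
      simp
    have : Φ x (W (z ξ)) = 0 :=
      (hΦ x (W (z ξ))).unique (by simpa [hterm] using hasSum_zero)
    simpa [mul_apply_eq_comp] using this
  have h1 : star Y * x * W * z = 0 := by
    have := hx w
    rw [← hW] at this
    calc star Y * x * W * z = star Y * (x * W * z) := by simp [mul_assoc]
    _ = 0 := by rw [this, mul_zero]
  rw [h𝓛 x]
  calc (star Y * x + x * Y + Φ x) * W * z
      = star Y * x * W * z + x * Y * W * z + Φ x * W * z := by simp [add_mul]
  _ = 0 := by rw [h1, hY, hΦ0]; simp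

lemma exp_kill (𝓛 : (H →L[ℂ] H) →L[ℂ] (H →L[ℂ] H)) (p z : H →L[ℂ] H)
    (h : ∀ n : ℕ, ((𝓛 ^ n) p) * z = 0) (t : ℝ) :
    (exp (t • 𝓛)) p * z = 0 := by
  ext ξ
  set G : ((H →L[ℂ] H) →L[ℂ] (H →L[ℂ] H)) →L[ℂ] H :=
    (ContinuousLinearMap.apply ℂ H (z ξ)).comp
      (ContinuousLinearMap.apply ℂ (H →L[ℂ] H) p) with hG
  have hGA : ∀ A : (H →L[ℂ] H) →L[ℂ] (H →L[ℂ] H), G A = (A p) (z ξ) := fun A => rfl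
  have hmain : G (exp (t • 𝓛)) = 0 := by
    rw [exp_eq_tsum ℂ]
    rw [G.map_tsum (expSeries_summable' (𝕂 := ℂ) (t • 𝓛))]
    have : ∀ n : ℕ, G (((n.factorial : ℂ))⁻¹ • (t • 𝓛) ^ n) = 0 := by
      intro n
      rw [map_smul, hGA]
      have hp : ∀ m : ℕ, ((t • 𝓛) ^ m) p = t ^ m • ((𝓛 ^ m) p) := by
        intro m
        induction m with
        | zero => simp
        | succ m ih =>
          rw [pow_succ', mul_apply_eq_comp, ih, ContinuousLinearMap.map_smul_of_tower,
            smul_apply, smul_smul]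
          rw [pow_succ' 𝓛 m, mul_apply_eq_comp]
          rw [pow_succ' t m, mul_comm (t^m) t]
      rw [hp n]
      have h0 : ((𝓛 ^ n) p) (z ξ) = 0 := by
        have := congrFun (congrArg DFunLike.coe (h n)) ξ
        simpa [mul_apply_eq_comp] using this
      simp only [smul_apply, h0, smul_zero]
    simp [this]
  rw [mul_apply_eq_comp, ← hGA, hmain]; simp

end Aux2

theorem lindblad_strong_limit_annihilates_iff_words_annihilate
    {H : Type*} [NormedAddCommGroup H] [InnerProductSpace ℂ H]
    [CompleteSpace H] [TopologicalSpace.SeparableSpace H]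
    (Y : H →L[ℂ] H) (L : ℕ → H →L[ℂ] H)
    (hdiss : ∀ ξ : H, HasSum (fun k => star (L k) ((L k) ξ))
      (-(star Y ξ + Y ξ)))
    (Φ : (H →L[ℂ] H) →L[ℂ] (H →L[ℂ] H))
    (hΦ : ∀ (x : H →L[ℂ] H) (ξ : H),
      HasSum (fun k => star (L k) (x ((L k) ξ))) (Φ x ξ))
    (𝓛 : (H →L[ℂ] H) →L[ℂ] (H →L[ℂ] H))
    (h𝓛 : ∀ x : H →L[ℂ] H, 𝓛 x = star Y * x + x * Y + Φ x)
    (τ : ℝ → (H →L[ℂ] H) →L[ℂ] (H →L[ℂ] H))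
    (hτ : ∀ t : ℝ, τ t = NormedSpace.exp (t • 𝓛))
    (p : H →L[ℂ] H) (hp_idem : p * p = p) (hp_sa : IsSelfAdjoint p)
    (hp_sub : ∀ t : ℝ, 0 ≤ t → ((τ t) p - p).IsPositive)
    (y : H →L[ℂ] H) (hy_pos : y.IsPositive) (hy_le : (1 - y).IsPositive)
    (hy_lim : ∀ ξ : H, Filter.Tendsto (fun t : ℝ => ((τ t) p) ξ)
      Filter.atTop (nhds (y ξ))) :
    ∀ z : H →L[ℂ] H, y * z = 0 ↔
      (p * z = 0 ∧ ∀ (n : ℕ) (i : Fin (n + 1) → ℕ),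
        p * (List.ofFn fun j => extendedFamily Y L (i j)).prod * z = 0) := by
  intro z
  haveI hsc : SMulCommClass ℂ ((H →L[ℂ] H) →L[ℂ] (H →L[ℂ] H))
      ((H →L[ℂ] H) →L[ℂ] (H →L[ℂ] H)) := ⟨fun c f g => by ext x; simp [smul_eq_mul]⟩
  haveI hst : IsScalarTower ℂ ((H →L[ℂ] H) →L[ℂ] (H →L[ℂ] H))
      ((H →L[ℂ] H) →L[ℂ] (H →L[ℂ] H)) := ⟨fun c f g => by ext x; rfl⟩
  -- continuity of the semigroup orbit
  have hcont : ∀ ξ : H, Continuous fun t : ℝ => (τ t p) ξ := by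
    intro ξ
    have h1 : Continuous fun t : ℝ => exp (t • 𝓛) :=
      continuous_iff_continuousAt.2 fun t => (hasDerivAt_exp_smul_const 𝓛 t).continuousAt
    have h2 : Continuous fun t : ℝ => ((exp (t • 𝓛)) p) ξ :=
      (ContinuousLinearMap.apply ℂ H ξ).continuous.comp
        (((ContinuousLinearMap.apply ℂ (H →L[ℂ] H) p).continuous).comp h1)
    simpa only [hτ] using h2
  -- uniform bound on the orbit
  obtain ⟨M, hM0, hM⟩ : ∃ M : ℝ, 0 ≤ M ∧ ∀ t : ℝ, 0 ≤ t → ‖τ t p‖ ≤ M := by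
    have hpt : ∀ ξ : H, ∃ C, ∀ i : {t : ℝ // 0 ≤ t}, ‖(τ i.1 p) ξ‖ ≤ C := by
      intro ξ
      obtain ⟨T, hT⟩ := (Metric.tendsto_atTop.mp (hy_lim ξ)) 1 one_pos
      obtain ⟨C₁, hC₁⟩ := (isCompact_Icc (a := (0:ℝ)) (b := max T 0)).exists_bound_of_continuousOn
        (hcont ξ).continuousOn
      refine ⟨max C₁ (‖y ξ‖ + 1), fun i => ?_⟩
      rcases le_or_gt i.1 (max T 0) with h | h
      · exact le_max_iff.mpr (Or.inl (hC₁ i.1 ⟨i.2, h⟩))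
      · have hTi : T ≤ i.1 := le_trans (le_max_left T 0) h.le
        have hd := hT i.1 hTi
        rw [dist_eq_norm] at hd
        have hb : ‖(τ i.1 p) ξ‖ ≤ ‖y ξ‖ + 1 := by
          calc ‖(τ i.1 p) ξ‖ = ‖y ξ + ((τ i.1 p) ξ - y ξ)‖ := by congr 1; abel
          _ ≤ ‖y ξ‖ + ‖(τ i.1 p) ξ - y ξ‖ := norm_add_le _ _
          _ ≤ ‖y ξ‖ + 1 := by linarith
        exact le_max_iff.mpr (Or.inr hb)
    obtain ⟨C', hC'⟩ := banach_steinhaus (g := fun i : {t : ℝ // 0 ≤ t} => τ i.1 p) hpt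
    exact ⟨max C' 0, le_max_right _ _, fun t ht => le_max_iff.mpr (Or.inl (hC' ⟨t, ht⟩))⟩
  -- ℓ² summability facts
  have hsq : ∀ ξ : H, Summable fun k => ‖L k ξ‖ ^ 2 := by
    intro ξ
    have h1 := (hdiss ξ).mapL (innerSL ℂ ξ)
    have h2 : HasSum (fun k => (⟪L k ξ, L k ξ⟫_ℂ)) (⟪ξ, -(star Y ξ + Y ξ)⟫_ℂ) := by
      refine h1.congr_fun fun k => ?_
      simp only [innerSL_apply_apply]
      exact (star_inner_move (L k) ξ (L k ξ)).symm
    have h3 := h2.mapL Complex.reCLM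
    have h4 : HasSum (fun k => ‖L k ξ‖ ^ 2) (Complex.reCLM (⟪ξ, -(star Y ξ + Y ξ)⟫_ℂ)) := by
      refine h3.congr_fun fun k => ?_
      simp only [Complex.reCLM_apply]
      rw [inner_self_eq_norm_sq_to_K]
      norm_cast
    exact h4.summable
  have hprod : ∀ ξ η : H, Summable fun k => ‖L k η‖ * ‖L k ξ‖ := by
    intro ξ η
    have hs := ((hsq η).add (hsq ξ)).mul_left (1/2 : ℝ)
    refine Summable.of_nonneg_of_le (fun k => by positivity) (fun k => ?_) hs
    nlinarith [sq_nonneg (‖L k η‖ - ‖L k ξ‖), norm_nonneg (L k η), norm_nonneg (L k ξ)]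
  -- the inner product decomposition of 𝓛
  have hinner𝓛 : ∀ (x : H →L[ℂ] H) (ξ η : H),
      ⟪η, (𝓛 x) ξ⟫_ℂ = ⟪Y η, x ξ⟫_ℂ + ⟪η, x (Y ξ)⟫_ℂ + ∑' k, ⟪L k η, x (L k ξ)⟫_ℂ := by
    intro x ξ η
    have happ : (𝓛 x) ξ = star Y (x ξ) + x (Y ξ) + Φ x ξ := by
      rw [h𝓛 x]; simp [mul_apply_eq_comp]
    have hΦsum : HasSum (fun k => (⟪L k η, x (L k ξ)⟫_ℂ)) (⟪η, Φ x ξ⟫_ℂ) := by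
      refine ((hΦ x ξ).mapL (innerSL ℂ η)).congr_fun fun k => ?_
      simp only [innerSL_apply_apply]
      exact (star_inner_move (L k) η (x (L k ξ))).symm
    rw [happ, inner_add_right, inner_add_right, star_inner_move Y η (x ξ), hΦsum.tsum_eq.symm]
  -- weak convergence of 𝓛 (τ t p) to 𝓛 y
  have hweak : ∀ ξ η : H,
      Tendsto (fun t : ℝ => (⟪η, (𝓛 (τ t p)) ξ⟫_ℂ)) atTop (nhds (⟪η, (𝓛 y) ξ⟫_ℂ)) := by
    intro ξ η
    have t1 : Tendsto (fun t : ℝ => (⟪Y η, (τ t p) ξ⟫_ℂ)) atTop (nhds (⟪Y η, y ξ⟫_ℂ)) :=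
      ((innerSL ℂ (Y η)).continuous.tendsto (y ξ)).comp (hy_lim ξ)
    have t2 : Tendsto (fun t : ℝ => (⟪η, (τ t p) (Y ξ)⟫_ℂ)) atTop (nhds (⟪η, y (Y ξ)⟫_ℂ)) :=
      ((innerSL ℂ η).continuous.tendsto (y (Y ξ))).comp (hy_lim (Y ξ))
    have t3 : Tendsto (fun t : ℝ => ∑' k, (⟪L k η, (τ t p) (L k ξ)⟫_ℂ)) atTop
        (nhds (∑' k, (⟪L k η, y (L k ξ)⟫_ℂ))) := by
      refine tendsto_tsum_of_dominated_convergence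
        (bound := fun k => M * (‖L k η‖ * ‖L k ξ‖)) ((hprod ξ η).mul_left M)
        (fun k => ((innerSL ℂ (L k η)).continuous.tendsto (y (L k ξ))).comp (hy_lim (L k ξ)))
        ?_
      filter_upwards [eventually_ge_atTop (0:ℝ)] with t ht k
      calc ‖(⟪L k η, (τ t p) (L k ξ)⟫_ℂ)‖ ≤ ‖L k η‖ * ‖(τ t p) (L k ξ)‖ :=
            norm_inner_le_norm _ _
      _ ≤ ‖L k η‖ * (M * ‖L k ξ‖) := by
          refine mul_le_mul_of_nonneg_left ?_ (norm_nonneg _)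
          calc ‖(τ t p) (L k ξ)‖ ≤ ‖τ t p‖ * ‖L k ξ‖ := (τ t p).le_opNorm _
          _ ≤ M * ‖L k ξ‖ := mul_le_mul_of_nonneg_right (hM t ht) (norm_nonneg _)
      _ = M * (‖L k η‖ * ‖L k ξ‖) := by ring
    have hsum3 := (t1.add t2).add t3
    have e2 := (hinner𝓛 y ξ η).symm
    exact e2 ▸ hsum3.congr (fun t => (hinner𝓛 (τ t p) ξ η).symm)
  -- differentiability of matrix elements
  have hD : ∀ (ξ η : H) (t : ℝ),
      HasDerivAt (fun u : ℝ => (⟪η, (τ u p) ξ⟫_ℂ)) (⟪η, (𝓛 (τ t p)) ξ⟫_ℂ) t := by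
    intro ξ η t
    set Ψ : ((H →L[ℂ] H) →L[ℂ] (H →L[ℂ] H)) →L[ℂ] ℂ :=
      (innerSL ℂ η).comp ((ContinuousLinearMap.apply ℂ H ξ).comp
        (ContinuousLinearMap.apply ℂ (H →L[ℂ] H) p)) with hΨ
    have hΨA : ∀ A : (H →L[ℂ] H) →L[ℂ] (H →L[ℂ] H), Ψ A = ⟪η, (A p) ξ⟫_ℂ := fun A => rfl
    have hee : (exp : ((H →L[ℂ] H) →L[ℂ] (H →L[ℂ] H)) → _) = exp :=
      rfl
    have h1 : HasDerivAt (fun u : ℝ => exp (u • 𝓛)) (exp (t • 𝓛) * 𝓛) t :=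
      hasDerivAt_exp_smul_const 𝓛 t
    have h2 := (Ψ.restrictScalars ℝ).hasFDerivAt.comp_hasDerivAt t h1
    have hrsmul : ∀ u : ℝ, u • 𝓛 = (u : ℂ) • 𝓛 := fun u =>
      RCLike.real_smul_eq_coe_smul (K := ℂ) u 𝓛
    have hfun : (fun u : ℝ => (Ψ.restrictScalars ℝ) (exp (u • 𝓛)))
        = fun u : ℝ => (⟪η, (τ u p) ξ⟫_ℂ) := by
      funext u
      show Ψ (exp (u • 𝓛)) = _
      rw [hee, ← hτ u]
      rfl
    have hcomm : exp (t • 𝓛) * 𝓛 = 𝓛 * exp (t • 𝓛) := by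
      rw [hee, hrsmul t]
      exact (((Commute.refl 𝓛).smul_left (t : ℂ)).exp_left).eq
    have hval : (Ψ.restrictScalars ℝ) (exp (t • 𝓛) * 𝓛) = ⟪η, (𝓛 (τ t p)) ξ⟫_ℂ := by
      show Ψ (exp (t • 𝓛) * 𝓛) = _
      rw [hcomm, hΨA, mul_apply_eq_comp, hee, ← hτ t]
    have h2' : HasDerivAt (fun u : ℝ => (Ψ.restrictScalars ℝ) (exp (u • 𝓛)))
        ((Ψ.restrictScalars ℝ) (exp (t • 𝓛) * 𝓛)) t := h2
    rw [hfun, hval] at h2'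
    exact h2'
  -- the strong limit is harmonic: 𝓛 y = 0
  have hLy : 𝓛 y = 0 := by
    ext ξ
    have hb : ∀ η : H, (⟪η, (𝓛 y) ξ⟫_ℂ) = 0 := by
      intro η
      exact deriv_limit_zero (hD ξ η)
        (((innerSL ℂ η).continuous.tendsto (y ξ)).comp (hy_lim ξ)) (hweak ξ η)
    have := hb ((𝓛 y) ξ)
    rw [inner_self_eq_zero] at this
    simpa using this
  -- the kernel of y is invariant
  have hker : ∀ ζ : H, y ζ = 0 → y (Y ζ) = 0 ∧ ∀ k, y (L k ζ) = 0 := by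
    intro ζ h0
    have happ : star Y (y ζ) + y (Y ζ) + Φ y ζ = 0 := by
      have h1 := congrFun (congrArg DFunLike.coe hLy) ζ
      rw [h𝓛 y] at h1
      simpa [mul_apply_eq_comp] using h1
    have hq : (⟪ζ, Φ y ζ⟫_ℂ) = 0 := by
      have h1 : (⟪ζ, star Y (y ζ) + y (Y ζ) + Φ y ζ⟫_ℂ) = 0 := by rw [happ, inner_zero_right]
      rw [inner_add_right, inner_add_right] at h1
      have e1 : (⟪ζ, star Y (y ζ)⟫_ℂ) = 0 := by rw [h0]; simp
      have e2 : (⟪ζ, y (Y ζ)⟫_ℂ) = 0 := by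
        rw [← adj_swap hy_pos.isSelfAdjoint ζ (Y ζ), h0, inner_zero_left]
      rw [e1, e2] at h1
      simpa using h1
    have hsum : HasSum (fun k => (⟪L k ζ, y (L k ζ)⟫_ℂ)) 0 := by
      rw [← hq]
      refine ((hΦ y ζ).mapL (innerSL ℂ ζ)).congr_fun fun k => ?_
      simp only [innerSL_apply_apply]
      exact (star_inner_move (L k) ζ (y (L k ζ))).symm
    have hre : HasSum (fun k => Complex.re (⟪L k ζ, y (L k ζ)⟫_ℂ)) 0 := by
      have := hsum.mapL Complex.reCLM
      simpa using this
    have hnn : ∀ k, 0 ≤ Complex.re (⟪L k ζ, y (L k ζ)⟫_ℂ) := fun k =>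
      hy_pos.re_inner_nonneg_right (L k ζ)
    have hzero := (hasSum_zero_iff_of_nonneg hnn).mp hre
    have hLk : ∀ k, y (L k ζ) = 0 := by
      intro k
      apply pos_ker hy_pos
      have hk := congrFun hzero k
      simp only [Pi.zero_apply] at hk
      rw [← inner_conj_symm, Complex.conj_re]
      exact hk
    have hΦ0 : Φ y ζ = 0 :=
      (hΦ y ζ).unique (by simpa [hLk] using hasSum_zero)
    refine ⟨?_, hLk⟩
    have := happ
    rw [h0, map_zero, hΦ0] at this
    simpa using this
  -- kernel of y is invariant under all words
  have hword : ∀ (w : List ℕ) (ζ : H), y ζ = 0 →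
      y (((w.map (extendedFamily Y L)).prod) ζ) = 0 := by
    intro w
    induction w with
    | nil => intro ζ h0; simpa using h0
    | cons a l ih =>
      intro ζ h0
      have h1 := ih ζ h0
      rw [List.map_cons, List.prod_cons, mul_apply_eq_comp]
      match a with
      | 0 => exact (hker _ h1).1
      | (k + 1) => exact (hker _ h1).2 k
  -- p vanishes wherever y does
  have hpy : ∀ ζ : H, y ζ = 0 → p ζ = 0 := by
    intro ζ h0
    have hle : RCLike.re (⟪p ζ, ζ⟫_ℂ) ≤ 0 := by
      have h1 : Tendsto (fun t : ℝ => (⟪(τ t p) ζ, ζ⟫_ℂ)) atTop (nhds (⟪y ζ, ζ⟫_ℂ)) :=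
        (hy_lim ζ).inner tendsto_const_nhds
      have h2 : Tendsto (fun t : ℝ => RCLike.re (⟪(τ t p) ζ, ζ⟫_ℂ)) atTop (nhds 0) := by
        have h3 := (Complex.continuous_re.tendsto _).comp h1
        rw [h0] at h3
        simpa [Function.comp_def] using h3
      refine ge_of_tendsto h2 ?_
      filter_upwards [eventually_ge_atTop (0:ℝ)] with t ht
      have h4 := (hp_sub t ht).2 ζ
      rw [reApplyInnerSelf, sub_apply, inner_sub_left, map_sub] at h4
      linarith
    have hpp : p (p ζ) = p ζ := by
      have := congrFun (congrArg DFunLike.coe hp_idem) ζ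
      simpa [mul_apply_eq_comp] using this
    have he : ‖p ζ‖ ^ 2 = RCLike.re (⟪p ζ, ζ⟫_ℂ) := by
      have h1 : (⟪p ζ, p ζ⟫_ℂ) = (⟪ζ, p ζ⟫_ℂ) := by
        rw [adj_swap hp_sa ζ (p ζ), hpp]
      have h2 : RCLike.re (⟪p ζ, p ζ⟫_ℂ) = ‖p ζ‖ ^ 2 := by
        rw [inner_self_eq_norm_sq_to_K]; norm_cast
      rw [← h2, h1, inner_re_symm]
    have hle2 : ‖p ζ‖ ^ 2 ≤ 0 := he ▸ hle
    have : ‖p ζ‖ = 0 := by nlinarith [norm_nonneg (p ζ)]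
    exact norm_eq_zero.mp this
  constructor
  · -- forward direction
    intro hyz
    have hz0 : ∀ ξ : H, y (z ξ) = 0 := by
      intro ξ
      have := congrFun (congrArg DFunLike.coe hyz) ξ
      simpa [mul_apply_eq_comp] using this
    constructor
    · ext ξ
      have := hpy (z ξ) (hz0 ξ)
      simp only [mul_apply_eq_comp, zero_apply]
      exact this
    · intro n i
      ext ξ
      have e : (List.ofFn fun j => extendedFamily Y L (i j))
          = (List.ofFn i).map (extendedFamily Y L) := by
        rw [List.map_ofFn]; rfl
      have hW := hword (List.ofFn i) (z ξ) (hz0 ξ)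
      have := hpy _ hW
      rw [e]
      simp only [mul_apply_eq_comp, zero_apply]
      exact this
  · -- reverse direction
    rintro ⟨h1, h2⟩
    have hw : ∀ w : List ℕ, p * ((w.map (extendedFamily Y L)).prod) * z = 0 := by
      intro w
      match w with
      | [] => simpa using h1
      | a :: l =>
        have h : p * (List.ofFn (extendedFamily Y L ∘ (a :: l).get)).prod * z = 0 :=
          h2 l.length ((a :: l).get)
        rwa [← List.map_ofFn, List.ofFn_get] at h
    have hn : ∀ (n : ℕ) (w : List ℕ),
        ((𝓛 ^ n) p) * ((w.map (extendedFamily Y L)).prod) * z = 0 := by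
      intro n
      induction n with
      | zero => simpa using hw
      | succ n ih =>
        intro w
        have hstep := step_words Y L Φ hΦ 𝓛 h𝓛 z ((𝓛 ^ n) p) ih w
        rw [pow_succ' 𝓛 n, mul_apply_eq_comp]
        exact hstep
    have hn0 : ∀ n : ℕ, ((𝓛 ^ n) p) * z = 0 := by
      intro n
      have := hn n []
      simpa using this
    have hτz : ∀ t : ℝ, (τ t p) * z = 0 := by
      intro t
      rw [hτ t]
      exact exp_kill 𝓛 p z hn0 t
    ext ξ
    have hlim : Tendsto (fun t : ℝ => (τ t p) (z ξ)) atTop (nhds (y (z ξ))) := hy_lim (z ξ)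
    have hzero : (fun t : ℝ => (τ t p) (z ξ)) = fun _ => (0 : H) := by
      funext t
      have := congrFun (congrArg DFunLike.coe (hτz t)) ξ
      simpa [mul_apply_eq_comp] using this
    rw [hzero] at hlim
    have := tendsto_nhds_unique hlim tendsto_const_nhds
    simp [mul_apply_eq_comp, this]
end
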